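/- arXiv:2404.18765 — 2 statements merged into one kernel-verified Lean document; each statement's English description precedes it below -/
import Mathlib

section
/- Under assumptions (A1)–(A4) with μ > 2, for every (f1,f2), (g1,g2) ∈ 𝒦 and every η ≥ r0 one has |E2(η; f1,f2) − E2(η; g1,g2)| ≤ Ẽ2·‖(f1,f2) − (g1,g2)‖, where Ẽ2 = 2a·[Ñ2/(L2m·(μ−2)·r0^(μ−2)) + N2M·L̃2/(L2m²·(3μ−2)·r0^(3μ−2))] + D2·[K̃2/(H_inf·L2m·(2μ+ν−1)·r0^(2μ+ν−1)) + (K2M/(H_inf·L2m))·(H̃/(H_inf·(2μ+ν−1)·r0^(2μ+ν−1)) + L̃2/(L2m·(3μ+ν−1)·r0^(3μ+ν−1)))], H_inf = (K1m/(μ+ν−1))·(s0^(−(μ+ν−1)) − r0^(−(μ+ν−1))), and H̃ = (K̃1·s0^(−(μ+ν−1)) + K̃2·r0^(−(μ+ν−1)))/(μ+ν−1). -/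
open MeasureTheory Filter Topology

noncomputable section

/-- The bundle of fixed constants of the problem. -/
structure Cst where
  nu : ℝ
  mu : ℝ
  a : ℝ
  D1 : ℝ
  D2 : ℝ
  Q : ℝ
  D1s : ℝ
  D2s : ℝ
  L1m : ℝ
  L1M : ℝ
  N1m : ℝ
  N1M : ℝ
  K1m : ℝ
  K1M : ℝ
  L2m : ℝ
  L2M : ℝ
  N2m : ℝ
  N2M : ℝ
  K2m : ℝ
  K2M : ℝ
  Lt1 : ℝ
  Nt1 : ℝ
  Kt1 : ℝ
  Lt2 : ℝ
  Nt2 : ℝ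
  Kt2 : ℝ

/-- The space `C[s0,r0]`, modeled as real functions continuous on `[s0,r0]`. -/
def C1 (s0 r0 : ℝ) : Set (ℝ → ℝ) := {f | ContinuousOn f (Set.Icc s0 r0)}

/-- The set `ℳ ⊆ C_b[r0,∞)`: bounded continuous functions on `[r0,∞)` with
`f(r0) = 0` and `f(η) → -1` as `η → ∞`. -/
def Mset (r0 : ℝ) : Set (ℝ → ℝ) :=
  {f | ContinuousOn f (Set.Ici r0) ∧ (∃ C, ∀ x ∈ Set.Ici r0, |f x| ≤ C) ∧
    f r0 = 0 ∧ Tendsto f atTop (𝓝 (-1))}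

/-- Sup norm of `f` over the set `S`. -/
def supOn (S : Set ℝ) (f : ℝ → ℝ) : ℝ := ⨆ x : S, |f x.1|

/-- Norm of the difference of two pairs in `𝒦 = C[s0,r0] × ℳ`. -/
def pairNorm (s0 r0 : ℝ) (f1 f2 g1 g2 : ℝ → ℝ) : ℝ :=
  max (supOn (Set.Icc s0 r0) (f1 - g1)) (supOn (Set.Ici r0) (f2 - g2))

/-- Positivity assumptions on all the fixed constants and on `s0, r0`. -/
def PosC (c : Cst) (s0 r0 : ℝ) : Prop :=
  0 < c.a ∧ 0 < c.nu ∧ c.nu < 1 ∧ 2 < c.mu ∧ 0 < s0 ∧ s0 < r0 ∧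
  0 < c.D1 ∧ 0 < c.D2 ∧ 0 < c.Q ∧ 0 < c.D1s ∧ 0 < c.D2s ∧
  0 < c.L1m ∧ 0 < c.L1M ∧ 0 < c.N1m ∧ 0 < c.N1M ∧ 0 < c.K1m ∧ 0 < c.K1M ∧
  0 < c.L2m ∧ 0 < c.L2M ∧ 0 < c.N2m ∧ 0 < c.N2M ∧ 0 < c.K2m ∧ 0 < c.K2M ∧
  0 < c.Lt1 ∧ 0 < c.Nt1 ∧ 0 < c.Kt1 ∧ 0 < c.Lt2 ∧ 0 < c.Nt2 ∧ 0 < c.Kt2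

/-- Positivity assumptions on all the fixed constants (no `s0, r0`). -/
def PosCst (c : Cst) : Prop :=
  0 < c.a ∧ 0 < c.nu ∧ c.nu < 1 ∧ 2 < c.mu ∧
  0 < c.D1 ∧ 0 < c.D2 ∧ 0 < c.Q ∧ 0 < c.D1s ∧ 0 < c.D2s ∧
  0 < c.L1m ∧ 0 < c.L1M ∧ 0 < c.N1m ∧ 0 < c.N1M ∧ 0 < c.K1m ∧ 0 < c.K1M ∧
  0 < c.L2m ∧ 0 < c.L2M ∧ 0 < c.N2m ∧ 0 < c.N2M ∧ 0 < c.K2m ∧ 0 < c.K2M ∧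
  0 < c.Lt1 ∧ 0 < c.Nt1 ∧ 0 < c.Kt1 ∧ 0 < c.Lt2 ∧ 0 < c.Nt2 ∧ 0 < c.Kt2

/-- Assumptions (A1)–(A4): continuity of the images of `L, N, K`, the two-sided
bounds and the Lipschitz bounds. -/
def Assum (c : Cst) (s0 r0 : ℝ) (L1 N1 K1 L2 N2 K2 : (ℝ → ℝ) → ℝ → ℝ) : Prop :=
  (∀ f1 ∈ C1 s0 r0,
    ContinuousOn (L1 f1) (Set.Icc s0 r0) ∧ ContinuousOn (N1 f1) (Set.Icc s0 r0) ∧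
      ContinuousOn (K1 f1) (Set.Icc s0 r0)) ∧
  (∀ f2 ∈ Mset r0,
    ContinuousOn (L2 f2) (Set.Ici r0) ∧ ContinuousOn (N2 f2) (Set.Ici r0) ∧
      ContinuousOn (K2 f2) (Set.Ici r0)) ∧
  (∀ f1 ∈ C1 s0 r0, ∀ η ∈ Set.Icc s0 r0,
    c.L1m * η ^ c.mu ≤ L1 f1 η ∧ L1 f1 η ≤ c.L1M * η ^ c.mu ∧
    c.N1m * η ^ (-c.mu) ≤ N1 f1 η ∧ N1 f1 η ≤ c.N1M * η ^ (-c.mu) ∧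
    c.K1m * η ^ (-c.mu) ≤ K1 f1 η ∧ K1 f1 η ≤ c.K1M * η ^ (-c.mu)) ∧
  (∀ f2 ∈ Mset r0, ∀ η ∈ Set.Ici r0,
    c.L2m * η ^ c.mu ≤ L2 f2 η ∧ L2 f2 η ≤ c.L2M * η ^ c.mu ∧
    c.N2m * η ^ (-c.mu) ≤ N2 f2 η ∧ N2 f2 η ≤ c.N2M * η ^ (-c.mu) ∧
    c.K2m * η ^ (-c.mu) ≤ K2 f2 η ∧ K2 f2 η ≤ c.K2M * η ^ (-c.mu)) ∧
  (∀ f1 ∈ C1 s0 r0, ∀ g1 ∈ C1 s0 r0, ∀ η ∈ Set.Icc s0 r0,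
    |L1 f1 η - L1 g1 η| ≤ c.Lt1 * supOn (Set.Icc s0 r0) (f1 - g1) ∧
    |N1 f1 η - N1 g1 η| ≤ c.Nt1 * supOn (Set.Icc s0 r0) (f1 - g1) ∧
    |K1 f1 η - K1 g1 η| ≤ c.Kt1 * η ^ (-c.mu) * supOn (Set.Icc s0 r0) (f1 - g1)) ∧
  (∀ f2 ∈ Mset r0, ∀ g2 ∈ Mset r0, ∀ η ∈ Set.Ici r0,
    |L2 f2 η - L2 g2 η| ≤ c.Lt2 * supOn (Set.Ici r0) (f2 - g2) ∧
    |N2 f2 η - N2 g2 η| ≤ c.Nt2 * supOn (Set.Ici r0) (f2 - g2) ∧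
    |K2 f2 η - K2 g2 η| ≤ c.Kt2 * η ^ (-c.mu) * supOn (Set.Ici r0) (f2 - g2))

/-- `H(f1,f2) = ∫_{s0}^{r0} K(f1)(v)/v^ν dv + ∫_{r0}^{∞} K(f2)(v)/v^ν dv`. -/
def Hf (c : Cst) (s0 r0 : ℝ) (L1 N1 K1 L2 N2 K2 : (ℝ → ℝ) → ℝ → ℝ) (f1 f2 : ℝ → ℝ) : ℝ :=
  (∫ v in s0..r0, K1 f1 v / v ^ c.nu) + ∫ v in Set.Ioi r0, K2 f2 v / v ^ c.nu

/-- `E1(η; f1,f2)`. -/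
def E1f (c : Cst) (s0 r0 : ℝ) (L1 N1 K1 L2 N2 K2 : (ℝ → ℝ) → ℝ → ℝ) (f1 f2 : ℝ → ℝ)
    (η : ℝ) : ℝ :=
  Real.exp (-(∫ v in s0..η,
    (2 * c.a * v * (N1 f1 v / L1 f1 v)
      + c.D1 / Hf c s0 r0 L1 N1 K1 L2 N2 K2 f1 f2 * (K1 f1 v / (L1 f1 v * v ^ c.nu)))))

/-- `Φ1(η; f1,f2)`. -/
def Phi1f (c : Cst) (s0 r0 : ℝ) (L1 N1 K1 L2 N2 K2 : (ℝ → ℝ) → ℝ → ℝ) (f1 f2 : ℝ → ℝ)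
    (η : ℝ) : ℝ :=
  ∫ v in s0..η, E1f c s0 r0 L1 N1 K1 L2 N2 K2 f1 f2 v / (L1 f1 v * v ^ c.nu)

/-- `H1(η; f1,f2)`. -/
def H1f (c : Cst) (s0 r0 : ℝ) (L1 N1 K1 L2 N2 K2 : (ℝ → ℝ) → ℝ → ℝ) (f1 f2 : ℝ → ℝ)
    (η : ℝ) : ℝ :=
  ∫ v in s0..η, K1 f1 v / (v ^ c.nu * E1f c s0 r0 L1 N1 K1 L2 N2 K2 f1 f2 v)

/-- `G1(η; f1,f2)`. -/
def G1f (c : Cst) (s0 r0 : ℝ) (L1 N1 K1 L2 N2 K2 : (ℝ → ℝ) → ℝ → ℝ) (f1 f2 : ℝ → ℝ)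
    (η : ℝ) : ℝ :=
  ∫ v in s0..η, E1f c s0 r0 L1 N1 K1 L2 N2 K2 f1 f2 v
    * H1f c s0 r0 L1 N1 K1 L2 N2 K2 f1 f2 v / (L1 f1 v * v ^ c.nu)

/-- `V1(f1,f2)(η)`. -/
def V1f (c : Cst) (s0 r0 : ℝ) (L1 N1 K1 L2 N2 K2 : (ℝ → ℝ) → ℝ → ℝ) (f1 f2 : ℝ → ℝ)
    (η : ℝ) : ℝ :=
  s0 ^ c.nu * c.Q * Real.exp (-s0 ^ 2)
      * (Phi1f c s0 r0 L1 N1 K1 L2 N2 K2 f1 f2 r0 - Phi1f c s0 r0 L1 N1 K1 L2 N2 K2 f1 f2 η)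
    + c.D1s / Hf c s0 r0 L1 N1 K1 L2 N2 K2 f1 f2 ^ 2
      * (G1f c s0 r0 L1 N1 K1 L2 N2 K2 f1 f2 r0 - G1f c s0 r0 L1 N1 K1 L2 N2 K2 f1 f2 η)

/-- `E2(η; f1,f2)`. -/
def E2f (c : Cst) (s0 r0 : ℝ) (L1 N1 K1 L2 N2 K2 : (ℝ → ℝ) → ℝ → ℝ) (f1 f2 : ℝ → ℝ)
    (η : ℝ) : ℝ :=
  Real.exp (-(∫ v in r0..η,
    (2 * c.a * v * (N2 f2 v / L2 f2 v)
      + c.D2 / Hf c s0 r0 L1 N1 K1 L2 N2 K2 f1 f2 * (K2 f2 v / (L2 f2 v * v ^ c.nu)))))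

/-- `Φ2(η; f1,f2)`. -/
def Phi2f (c : Cst) (s0 r0 : ℝ) (L1 N1 K1 L2 N2 K2 : (ℝ → ℝ) → ℝ → ℝ) (f1 f2 : ℝ → ℝ)
    (η : ℝ) : ℝ :=
  ∫ v in r0..η, E2f c s0 r0 L1 N1 K1 L2 N2 K2 f1 f2 v / (L2 f2 v * v ^ c.nu)

/-- `Φ2(∞; f1,f2)`. -/
def Phi2I (c : Cst) (s0 r0 : ℝ) (L1 N1 K1 L2 N2 K2 : (ℝ → ℝ) → ℝ → ℝ) (f1 f2 : ℝ → ℝ) : ℝ :=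
  ∫ v in Set.Ioi r0, E2f c s0 r0 L1 N1 K1 L2 N2 K2 f1 f2 v / (L2 f2 v * v ^ c.nu)

/-- `H2(η; f1,f2)`. -/
def H2f (c : Cst) (s0 r0 : ℝ) (L1 N1 K1 L2 N2 K2 : (ℝ → ℝ) → ℝ → ℝ) (f1 f2 : ℝ → ℝ)
    (η : ℝ) : ℝ :=
  ∫ v in r0..η, K2 f2 v / (v ^ c.nu * E2f c s0 r0 L1 N1 K1 L2 N2 K2 f1 f2 v)

/-- `G2(η; f1,f2)`. -/
def G2f (c : Cst) (s0 r0 : ℝ) (L1 N1 K1 L2 N2 K2 : (ℝ → ℝ) → ℝ → ℝ) (f1 f2 : ℝ → ℝ)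
    (η : ℝ) : ℝ :=
  ∫ v in r0..η, E2f c s0 r0 L1 N1 K1 L2 N2 K2 f1 f2 v
    * H2f c s0 r0 L1 N1 K1 L2 N2 K2 f1 f2 v / (L2 f2 v * v ^ c.nu)

/-- `G2(∞; f1,f2) = lim_{η→∞} G2(η; f1,f2)`. -/
def G2I (c : Cst) (s0 r0 : ℝ) (L1 N1 K1 L2 N2 K2 : (ℝ → ℝ) → ℝ → ℝ) (f1 f2 : ℝ → ℝ) : ℝ :=
  limUnder atTop (G2f c s0 r0 L1 N1 K1 L2 N2 K2 f1 f2)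

/-- `V2(f1,f2)(η)`. -/
def V2f (c : Cst) (s0 r0 : ℝ) (L1 N1 K1 L2 N2 K2 : (ℝ → ℝ) → ℝ → ℝ) (f1 f2 : ℝ → ℝ)
    (η : ℝ) : ℝ :=
  (c.D2s / Hf c s0 r0 L1 N1 K1 L2 N2 K2 f1 f2 ^ 2 * G2I c s0 r0 L1 N1 K1 L2 N2 K2 f1 f2 - 1)
      * (Phi2f c s0 r0 L1 N1 K1 L2 N2 K2 f1 f2 η / Phi2I c s0 r0 L1 N1 K1 L2 N2 K2 f1 f2)
    - c.D2s / Hf c s0 r0 L1 N1 K1 L2 N2 K2 f1 f2 ^ 2 * G2f c s0 r0 L1 N1 K1 L2 N2 K2 f1 f2 η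

/-! Constants appearing in the estimates. -/

def Hinf (c : Cst) (s0 r0 : ℝ) : ℝ :=
  c.K1m / (c.mu + c.nu - 1) * (s0 ^ (-(c.mu + c.nu - 1)) - r0 ^ (-(c.mu + c.nu - 1)))

def Hsup (c : Cst) (s0 r0 : ℝ) : ℝ :=
  (c.K1M * s0 ^ (-(c.mu + c.nu - 1)) + c.K2M * r0 ^ (-(c.mu + c.nu - 1))) / (c.mu + c.nu - 1)

def Htil (c : Cst) (s0 r0 : ℝ) : ℝ :=
  (c.Kt1 * s0 ^ (-(c.mu + c.nu - 1)) + c.Kt2 * r0 ^ (-(c.mu + c.nu - 1))) / (c.mu + c.nu - 1)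

/-- Limit of `Hinf` as `r0 → ∞`. -/
def HinfI (c : Cst) (s0 : ℝ) : ℝ := c.K1m / (c.mu + c.nu - 1) * s0 ^ (-(c.mu + c.nu - 1))

/-- Limit of `Hsup` as `r0 → ∞`. -/
def HsupI (c : Cst) (s0 : ℝ) : ℝ := c.K1M * s0 ^ (-(c.mu + c.nu - 1)) / (c.mu + c.nu - 1)

/-- Limit of `Htil` as `r0 → ∞`. -/
def HtilI (c : Cst) (s0 : ℝ) : ℝ := c.Kt1 * s0 ^ (-(c.mu + c.nu - 1)) / (c.mu + c.nu - 1)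

/-- `E1inf` as a function of the value `h` of `Hinf`. -/
def E1infG (c : Cst) (s0 h : ℝ) : ℝ :=
  Real.exp (-(c.a * c.N1M / (c.L1m * (c.mu - 1) * s0 ^ (2 * c.mu - 2))
    + c.D1 * c.K1M / (h * c.L1m * (2 * c.mu + c.nu - 1) * s0 ^ (2 * c.mu + c.nu - 1))))

/-- `Ẽ1` as a function of the values `h` of `Hinf` and `ht` of `Htil`. -/
def E1tilG (c : Cst) (s0 h ht : ℝ) : ℝ :=
  2 * c.a * (c.Nt1 / (c.L1m * (c.mu - 2) * s0 ^ (c.mu - 2))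
      + c.N1M * c.Lt1 / (c.L1m ^ 2 * (3 * c.mu - 2) * s0 ^ (3 * c.mu - 2)))
    + c.D1 * (c.Kt1 / (h * c.L1m * (2 * c.mu + c.nu - 1) * s0 ^ (2 * c.mu + c.nu - 1))
      + c.K1M / (h * c.L1m)
        * (ht / (h * (2 * c.mu + c.nu - 1) * s0 ^ (2 * c.mu + c.nu - 1))
          + c.Lt1 / (c.L1m * (3 * c.mu + c.nu - 1) * s0 ^ (3 * c.mu + c.nu - 1))))

def Phi1tilG (c : Cst) (s0 h ht : ℝ) : ℝ :=
  E1tilG c s0 h ht / (c.L1m * (c.mu + c.nu - 1) * s0 ^ (c.mu + c.nu - 1))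
    + c.Lt1 / (c.L1m ^ 2 * (2 * c.mu + c.nu - 1) * s0 ^ (2 * c.mu + c.nu - 1))

def H1supG (c : Cst) (s0 h : ℝ) : ℝ :=
  c.K1M / (E1infG c s0 h * (c.mu + c.nu - 1) * s0 ^ (c.mu + c.nu - 1))

def H1tilG (c : Cst) (s0 h ht : ℝ) : ℝ :=
  (c.Kt1 + c.K1M * E1tilG c s0 h ht / E1infG c s0 h)
    / (E1infG c s0 h * (c.mu + c.nu - 1) * s0 ^ (c.mu + c.nu - 1))

def G1supG (c : Cst) (s0 h : ℝ) : ℝ :=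
  H1supG c s0 h / (c.L1m * (c.mu + c.nu - 1) * s0 ^ (c.mu + c.nu - 1))

def G1tilG (c : Cst) (s0 h ht : ℝ) : ℝ :=
  H1supG c s0 h * Phi1tilG c s0 h ht
    + H1tilG c s0 h ht / (c.L1m * (c.mu + c.nu - 1) * s0 ^ (c.mu + c.nu - 1))

/-- `ε1` as a function of the values `h` of `Hinf`, `hs` of `Hsup`, `ht` of `Htil`. -/
def eps1G (c : Cst) (s0 h hs ht : ℝ) : ℝ :=
  2 * s0 ^ c.nu * c.Q * Real.exp (-s0 ^ 2) * Phi1tilG c s0 h ht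
    + 2 * c.D1s * (2 * G1supG c s0 h * hs * ht / h ^ 4 + G1tilG c s0 h ht / h ^ 2)

def E1inf (c : Cst) (s0 r0 : ℝ) : ℝ := E1infG c s0 (Hinf c s0 r0)
def E1til (c : Cst) (s0 r0 : ℝ) : ℝ := E1tilG c s0 (Hinf c s0 r0) (Htil c s0 r0)
def Phi1til (c : Cst) (s0 r0 : ℝ) : ℝ := Phi1tilG c s0 (Hinf c s0 r0) (Htil c s0 r0)
def H1sup (c : Cst) (s0 r0 : ℝ) : ℝ := H1supG c s0 (Hinf c s0 r0)
def H1til (c : Cst) (s0 r0 : ℝ) : ℝ := H1tilG c s0 (Hinf c s0 r0) (Htil c s0 r0)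
def G1sup (c : Cst) (s0 r0 : ℝ) : ℝ := G1supG c s0 (Hinf c s0 r0)
def G1til (c : Cst) (s0 r0 : ℝ) : ℝ := G1tilG c s0 (Hinf c s0 r0) (Htil c s0 r0)
def eps1 (c : Cst) (s0 r0 : ℝ) : ℝ := eps1G c s0 (Hinf c s0 r0) (Hsup c s0 r0) (Htil c s0 r0)

/-- `j1(s0) = lim_{r0→∞} ε1(r0,s0)`: the same expression with `Hinf, Hsup, Htil`
replaced by their limits as `r0 → ∞`. -/
def j1 (c : Cst) (s0 : ℝ) : ℝ := eps1G c s0 (HinfI c s0) (HsupI c s0) (HtilI c s0)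

def E2inf (c : Cst) (s0 r0 : ℝ) : ℝ :=
  Real.exp (-(c.a * c.N2M / (c.L2m * (c.mu - 1) * r0 ^ (2 * c.mu - 2))
    + c.D2 * c.K2M / (Hinf c s0 r0 * c.L2m * (2 * c.mu + c.nu - 1) * r0 ^ (2 * c.mu + c.nu - 1))))

def E2til (c : Cst) (s0 r0 : ℝ) : ℝ :=
  2 * c.a * (c.Nt2 / (c.L2m * (c.mu - 2) * r0 ^ (c.mu - 2))
      + c.N2M * c.Lt2 / (c.L2m ^ 2 * (3 * c.mu - 2) * r0 ^ (3 * c.mu - 2)))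
    + c.D2 * (c.Kt2 / (Hinf c s0 r0 * c.L2m * (2 * c.mu + c.nu - 1) * r0 ^ (2 * c.mu + c.nu - 1))
      + c.K2M / (Hinf c s0 r0 * c.L2m)
        * (Htil c s0 r0 / (Hinf c s0 r0 * (2 * c.mu + c.nu - 1) * r0 ^ (2 * c.mu + c.nu - 1))
          + c.Lt2 / (c.L2m * (3 * c.mu + c.nu - 1) * r0 ^ (3 * c.mu + c.nu - 1))))

def Phi2til (c : Cst) (s0 r0 : ℝ) : ℝ :=
  E2til c s0 r0 / (c.L2m * (c.mu + c.nu - 1) * r0 ^ (c.mu + c.nu - 1))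
    + c.Lt2 / (c.L2m ^ 2 * (2 * c.mu + c.nu - 1) * r0 ^ (2 * c.mu + c.nu - 1))

/-- `Φ2inf(∞)(r0,s0)`. -/
def Phi2infC (c : Cst) (s0 r0 : ℝ) : ℝ :=
  E2inf c s0 r0 / (c.L2M * (c.mu + c.nu - 1) * r0 ^ (c.mu + c.nu - 1))

/-- `Φ2sup(r0)`. -/
def Phi2supC (c : Cst) (r0 : ℝ) : ℝ := 1 / (c.L2m * (c.mu + c.nu - 1) * r0 ^ (c.mu + c.nu - 1))

def H2sup (c : Cst) (s0 r0 : ℝ) : ℝ :=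
  c.K2M / (E2inf c s0 r0 * (c.mu + c.nu - 1) * r0 ^ (c.mu + c.nu - 1))

def H2til (c : Cst) (s0 r0 : ℝ) : ℝ :=
  (c.Kt2 + c.K2M * E2til c s0 r0 / E2inf c s0 r0)
    / (E2inf c s0 r0 * (c.mu + c.nu - 1) * r0 ^ (c.mu + c.nu - 1))

def G2sup (c : Cst) (s0 r0 : ℝ) : ℝ :=
  H2sup c s0 r0 / (c.L2m * (c.mu + c.nu - 1) * r0 ^ (c.mu + c.nu - 1))

def G2til (c : Cst) (s0 r0 : ℝ) : ℝ :=
  H2sup c s0 r0 * Phi2til c s0 r0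
    + H2til c s0 r0 / (c.L2m * (c.mu + c.nu - 1) * r0 ^ (c.mu + c.nu - 1))

def eps21 (c : Cst) (s0 r0 : ℝ) : ℝ := 2 * Phi2til c s0 r0 / Phi2infC c s0 r0

def eps22 (c : Cst) (s0 r0 : ℝ) : ℝ :=
  G2til c s0 r0 / Hinf c s0 r0 ^ 2
    + 2 * G2sup c s0 r0 * Hsup c s0 r0 * Htil c s0 r0 / Hinf c s0 r0 ^ 4

def eps23 (c : Cst) (s0 r0 : ℝ) : ℝ :=
  Phi2supC c r0 / Phi2infC c s0 r0 * eps22 c s0 r0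
    + G2sup c s0 r0 / Hinf c s0 r0 ^ 2 * eps21 c s0 r0

def eps2 (c : Cst) (s0 r0 : ℝ) : ℝ := eps21 c s0 r0 + eps22 c s0 r0 + eps23 c s0 r0



lemma exp_lip' {x y : ℝ} (hx : x ≤ 0) (hy : y ≤ 0) (hxy : x ≤ y) :
    Real.exp y - Real.exp x ≤ y - x := by
  have h1 : Real.exp y - Real.exp x = Real.exp y * (1 - Real.exp (x - y)) := by
    rw [mul_sub, mul_one, ← Real.exp_add]; ring_nf
  rw [h1]
  have h2 : 1 - Real.exp (x - y) ≤ y - x := by linarith [Real.add_one_le_exp (x - y)]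
  have h3 : 0 ≤ 1 - Real.exp (x - y) := by
    have := Real.exp_le_one_iff.mpr (by linarith : x - y ≤ 0); linarith
  calc Real.exp y * (1 - Real.exp (x - y)) ≤ 1 * (y - x) := by
        apply mul_le_mul (Real.exp_le_one_iff.mpr hy) h2 h3 zero_le_one
    _ = y - x := one_mul _

lemma exp_lip {A B : ℝ} (hA : 0 ≤ A) (hB : 0 ≤ B) :
    |Real.exp (-A) - Real.exp (-B)| ≤ |A - B| := by
  rcases le_total A B with h | h
  · rw [abs_of_nonneg (by linarith [Real.exp_le_exp.2 (by linarith : -B ≤ -A)]),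
      abs_of_nonpos (by linarith)]
    linarith [exp_lip' (by linarith : -B ≤ 0) (by linarith : -A ≤ 0) (by linarith)]
  · rw [abs_of_nonpos (by linarith [Real.exp_le_exp.2 (by linarith : -A ≤ -B)]),
      abs_of_nonneg (by linarith)]
    linarith [exp_lip' (by linarith : -A ≤ 0) (by linarith : -B ≤ 0) (by linarith)]

lemma int_rpow_eq {p a b : ℝ} (hp : p ≠ 1) (ha : 0 < a) (hab : a ≤ b) :
    ∫ v in a..b, v ^ (-p) = (a ^ (-(p-1)) - b ^ (-(p-1))) / (p - 1) := by
  rw [integral_rpow (Or.inr ⟨by intro h; apply hp; linarith [neg_eq_iff_eq_neg.mp h],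
    Set.notMem_uIcc_of_lt ha (lt_of_lt_of_le ha hab)⟩)]
  rw [show -p + 1 = -(p-1) by ring]
  rw [div_eq_div_iff (by intro h; apply hp; linarith) (by intro h; apply hp; linarith)]
  ring

lemma int_rpow_le {p a b : ℝ} (hp : 1 < p) (ha : 0 < a) (hab : a ≤ b) :
    ∫ v in a..b, v ^ (-p) ≤ 1 / ((p - 1) * a ^ (p - 1)) := by
  rw [int_rpow_eq (by linarith) ha hab]
  have h1 : a ^ (-(p-1)) = (a ^ (p-1))⁻¹ := Real.rpow_neg ha.le _
  have h2 : (0:ℝ) ≤ b ^ (-(p-1)) := Real.rpow_nonneg (by linarith) _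
  have h3 : (0:ℝ) < a ^ (p-1) := Real.rpow_pos_of_pos ha _
  rw [h1, show 1 / ((p - 1) * a ^ (p-1)) = (a ^ (p-1))⁻¹ / (p-1) by field_simp]
  gcongr
  · linarith

lemma int_Ioi_rpow_eq {p a : ℝ} (hp : 1 < p) (ha : 0 < a) :
    ∫ v in Set.Ioi a, v ^ (-p) = a ^ (-(p-1)) / (p - 1) := by
  rw [integral_Ioi_rpow_of_lt (by linarith) ha]
  rw [show -p + 1 = -(p-1) by ring]
  rw [div_eq_div_iff (by intro h; nlinarith [neg_eq_iff_eq_neg.mp h]) (by linarith)]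
  ring

lemma contOn_rpow {S : Set ℝ} (hS : ∀ x ∈ S, (0:ℝ) < x) (r : ℝ) :
    ContinuousOn (fun v : ℝ => v ^ r) S :=
  ContinuousOn.rpow_const continuousOn_id (fun x hx => Or.inl (hS x hx).ne')

lemma rpow_neg_add {v p q : ℝ} (hv : 0 < v) : v ^ (-(p + q)) = v ^ (-p) / v ^ q := by
  rw [show -(p+q) = -p + -q by ring, Real.rpow_add hv, Real.rpow_neg hv.le q, div_eq_mul_inv]


set_option maxHeartbeats 1000000 in
theorem stmt11 (c : Cst) (s0 r0 : ℝ) (L1 N1 K1 L2 N2 K2 : (ℝ → ℝ) → ℝ → ℝ)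
    (hpos : PosC c s0 r0) (hA : Assum c s0 r0 L1 N1 K1 L2 N2 K2)
    (f1 f2 : ℝ → ℝ) (hf1 : f1 ∈ C1 s0 r0) (hf2 : f2 ∈ Mset r0)
    (g1 g2 : ℝ → ℝ) (hg1 : g1 ∈ C1 s0 r0) (hg2 : g2 ∈ Mset r0) :
    ∀ η ∈ Set.Ici r0,
      |E2f c s0 r0 L1 N1 K1 L2 N2 K2 f1 f2 η - E2f c s0 r0 L1 N1 K1 L2 N2 K2 g1 g2 η| ≤ E2til c s0 r0 * pairNorm s0 r0 f1 f2 g1 g2 := by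
  
  obtain ⟨ha, hnu0, hnu1, hmu, hs0, hs0r0, hD1, hD2, hQ, hD1s, hD2s, hL1m, hL1M, hN1m, hN1M,
    hK1m, hK1M, hL2m, hL2M, hN2m, hN2M, hK2m, hK2M, hLt1, hNt1, hKt1, hLt2, hNt2, hKt2⟩ := hpos
  obtain ⟨hA1, hA2, hA3, hA4, hA5, hA6⟩ := hA
  intro η hη
  have hη' : r0 ≤ η := hη
  have hr0 : 0 < r0 := hs0.trans hs0r0
  have hmn : (1:ℝ) < c.mu + c.nu := by linarith
  have hq : (0:ℝ) < c.mu + c.nu - 1 := by linarith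
  set δ1 := supOn (Set.Icc s0 r0) (f1 - g1) with hd1def
  set δ2 := supOn (Set.Ici r0) (f2 - g2) with hd2def
  have hδ1nn : 0 ≤ δ1 := by rw [hd1def]; exact Real.iSup_nonneg fun x => abs_nonneg _
  have hδ2nn : 0 ≤ δ2 := by rw [hd2def]; exact Real.iSup_nonneg fun x => abs_nonneg _
  have hpn : pairNorm s0 r0 f1 f2 g1 g2 = max δ1 δ2 := rfl
  rw [hpn]
  set δ := max δ1 δ2 with hddef
  have hδ1le : δ1 ≤ δ := le_max_left _ _
  have hδ2le : δ2 ≤ δ := le_max_right _ _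
  have hδnn : 0 ≤ δ := hδ1nn.trans hδ1le
  have hs0q : (0:ℝ) < s0 ^ (-(c.mu + c.nu - 1)) := Real.rpow_pos_of_pos hs0 _
  have hr0q : (0:ℝ) < r0 ^ (-(c.mu + c.nu - 1)) := Real.rpow_pos_of_pos hr0 _
  have hHinfpos : 0 < Hinf c s0 r0 := by
    have h := Real.rpow_lt_rpow_of_neg hs0 hs0r0 (by linarith : -(c.mu + c.nu - 1) < 0)
    have h2 : (0:ℝ) < c.K1m / (c.mu + c.nu - 1) := div_pos hK1m hq
    unfold Hinf
    exact mul_pos h2 (by linarith)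
  have hHtnn : 0 ≤ Htil c s0 r0 := by
    unfold Htil
    apply div_nonneg _ hq.le
    exact add_nonneg (mul_nonneg hKt1.le hs0q.le) (mul_nonneg hKt2.le hr0q.le)
  -- continuity and integrability of the H integrands
  have hposIcc1 : ∀ x ∈ Set.Icc s0 r0, (0:ℝ) < x := fun x hx => lt_of_lt_of_le hs0 hx.1
  have hu1 : Set.uIcc s0 r0 = Set.Icc s0 r0 := Set.uIcc_of_le hs0r0.le
  have hcK1 : ∀ p1 ∈ C1 s0 r0, ContinuousOn (fun v => K1 p1 v / v ^ c.nu) (Set.Icc s0 r0) := by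
    intro p1 hp1
    exact (hA1 p1 hp1).2.2.div (contOn_rpow hposIcc1 _)
      (fun x hx => (Real.rpow_pos_of_pos (hposIcc1 x hx) _).ne')
  have hiK1 : ∀ p1 ∈ C1 s0 r0, IntervalIntegrable (fun v => K1 p1 v / v ^ c.nu) volume s0 r0 :=
    fun p1 hp1 => ((hcK1 p1 hp1).mono hu1.subset).intervalIntegrable
  have hiK2 : ∀ p2 ∈ Mset r0, IntegrableOn (fun v => K2 p2 v / v ^ c.nu) (Set.Ioi r0) := by
    intro p2 hp2
    have hmeas : AEStronglyMeasurable (fun v => K2 p2 v / v ^ c.nu)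
        (volume.restrict (Set.Ioi r0)) := by
      apply ContinuousOn.aestronglyMeasurable _ measurableSet_Ioi
      exact ((hA2 p2 hp2).2.2.mono Set.Ioi_subset_Ici_self).div
        (contOn_rpow (fun x hx => hr0.trans hx) _)
        (fun x hx => (Real.rpow_pos_of_pos (hr0.trans hx) _).ne')
    apply Integrable.mono'
      ((integrableOn_Ioi_rpow_of_lt (by linarith : -(c.mu + c.nu) < -1) hr0).const_mul c.K2M)
      hmeas
    rw [ae_restrict_iff' measurableSet_Ioi]
    refine ae_of_all _ fun v hv => ?_
    have hv0 : 0 < v := hr0.trans hv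
    have hb := hA4 p2 hp2 v (Set.Ioi_subset_Ici_self hv)
    have hXm : (0:ℝ) < v ^ (-c.mu) := Real.rpow_pos_of_pos hv0 _
    have hK0 : 0 ≤ K2 p2 v := le_trans (mul_nonneg hK2m.le hXm.le) hb.2.2.2.2.1
    have hY : (0:ℝ) < v ^ c.nu := Real.rpow_pos_of_pos hv0 _
    rw [Real.norm_eq_abs, abs_div, abs_of_nonneg hK0, abs_of_pos hY, rpow_neg_add hv0,
      ← mul_div_assoc]
    gcongr
    exact hb.2.2.2.2.2
  -- lower bound on Hf
  have hHlow : ∀ p1 ∈ C1 s0 r0, ∀ p2 ∈ Mset r0,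
      Hinf c s0 r0 ≤ Hf c s0 r0 L1 N1 K1 L2 N2 K2 p1 p2 := by
    intro p1 hp1 p2 hp2
    have hI2 : 0 ≤ ∫ v in Set.Ioi r0, K2 p2 v / v ^ c.nu := by
      apply setIntegral_nonneg measurableSet_Ioi
      intro v hv
      have hv0 : 0 < v := hr0.trans hv
      have hXm : (0:ℝ) < v ^ (-c.mu) := Real.rpow_pos_of_pos hv0 _
      have hY : (0:ℝ) < v ^ c.nu := Real.rpow_pos_of_pos hv0 _
      have hK0 : 0 ≤ K2 p2 v :=
        le_trans (mul_nonneg hK2m.le hXm.le) (hA4 p2 hp2 v (Set.Ioi_subset_Ici_self hv)).2.2.2.2.1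
      exact div_nonneg hK0 hY.le
    have heq : ∫ v in s0..r0, c.K1m * v ^ (-(c.mu + c.nu)) = Hinf c s0 r0 := by
      rw [intervalIntegral.integral_const_mul, int_rpow_eq hmn.ne' hs0 hs0r0.le]
      unfold Hinf
      field_simp [hq.ne']
    have hI1 : Hinf c s0 r0 ≤ ∫ v in s0..r0, K1 p1 v / v ^ c.nu := by
      rw [← heq]
      apply intervalIntegral.integral_mono_on hs0r0.le
        (((continuousOn_const.mul (contOn_rpow hposIcc1 _)).mono hu1.subset).intervalIntegrable)
        (hiK1 p1 hp1)
      intro v hv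
      have hv0 : 0 < v := hposIcc1 v hv
      show c.K1m * v ^ (-(c.mu + c.nu)) ≤ K1 p1 v / v ^ c.nu
      rw [rpow_neg_add hv0, ← mul_div_assoc]
      have hY : (0:ℝ) < v ^ c.nu := Real.rpow_pos_of_pos hv0 _
      gcongr
      exact (hA3 p1 hp1 v hv).2.2.2.2.1
    unfold Hf
    linarith
  -- Lipschitz bound on Hf
  have hHlip : |Hf c s0 r0 L1 N1 K1 L2 N2 K2 f1 f2 - Hf c s0 r0 L1 N1 K1 L2 N2 K2 g1 g2|
      ≤ Htil c s0 r0 * δ := by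
    have h1 : |(∫ v in s0..r0, K1 f1 v / v ^ c.nu) - ∫ v in s0..r0, K1 g1 v / v ^ c.nu|
        ≤ c.Kt1 * δ1 * (s0 ^ (-(c.mu + c.nu - 1)) / (c.mu + c.nu - 1)) := by
      rw [← intervalIntegral.integral_sub (hiK1 f1 hf1) (hiK1 g1 hg1)]
      have hb : ∫ v in s0..r0, c.Kt1 * δ1 * v ^ (-(c.mu + c.nu))
          = c.Kt1 * δ1 * ((s0 ^ (-(c.mu + c.nu - 1)) - r0 ^ (-(c.mu + c.nu - 1)))
              / (c.mu + c.nu - 1)) := by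
        rw [intervalIntegral.integral_const_mul, int_rpow_eq hmn.ne' hs0 hs0r0.le]
      calc |∫ v in s0..r0, (K1 f1 v / v ^ c.nu - K1 g1 v / v ^ c.nu)|
          ≤ ∫ v in s0..r0, |K1 f1 v / v ^ c.nu - K1 g1 v / v ^ c.nu| :=
            intervalIntegral.abs_integral_le_integral_abs hs0r0.le
        _ ≤ ∫ v in s0..r0, c.Kt1 * δ1 * v ^ (-(c.mu + c.nu)) := by
            apply intervalIntegral.integral_mono_on hs0r0.le
              ((((hcK1 f1 hf1).sub (hcK1 g1 hg1)).abs.mono hu1.subset).intervalIntegrable)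
              (((continuousOn_const.mul (contOn_rpow hposIcc1 _)).mono
                hu1.subset).intervalIntegrable)
            intro v hv
            have hv0 : 0 < v := hposIcc1 v hv
            have hY : (0:ℝ) < v ^ c.nu := Real.rpow_pos_of_pos hv0 _
            show |K1 f1 v / v ^ c.nu - K1 g1 v / v ^ c.nu| ≤ c.Kt1 * δ1 * v ^ (-(c.mu + c.nu))
            rw [div_sub_div_same, abs_div, abs_of_pos hY, rpow_neg_add hv0, ← mul_div_assoc]
            gcongr
            have hl := (hA5 f1 hf1 g1 hg1 v hv).2.2
            rw [← hd1def] at hl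
            linarith
        _ ≤ c.Kt1 * δ1 * (s0 ^ (-(c.mu + c.nu - 1)) / (c.mu + c.nu - 1)) := by
            rw [hb]
            have hc0 : 0 ≤ c.Kt1 * δ1 := mul_nonneg hKt1.le hδ1nn
            have h2 : (s0 ^ (-(c.mu + c.nu - 1)) - r0 ^ (-(c.mu + c.nu - 1)))
                / (c.mu + c.nu - 1) ≤ s0 ^ (-(c.mu + c.nu - 1)) / (c.mu + c.nu - 1) := by
              gcongr
              linarith
            exact mul_le_mul_of_nonneg_left h2 hc0
    have h2 : |(∫ v in Set.Ioi r0, K2 f2 v / v ^ c.nu) - ∫ v in Set.Ioi r0, K2 g2 v / v ^ c.nu|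
        ≤ c.Kt2 * δ2 * (r0 ^ (-(c.mu + c.nu - 1)) / (c.mu + c.nu - 1)) := by
      rw [← MeasureTheory.integral_sub (hiK2 f2 hf2) (hiK2 g2 hg2)]
      have hgint : Integrable (fun v => c.Kt2 * δ2 * v ^ (-(c.mu + c.nu)))
          (volume.restrict (Set.Ioi r0)) :=
        (integrableOn_Ioi_rpow_of_lt (by linarith : -(c.mu + c.nu) < -1) hr0).const_mul _
      have hub : ∀ᵐ v ∂volume.restrict (Set.Ioi r0),
          ‖K2 f2 v / v ^ c.nu - K2 g2 v / v ^ c.nu‖ ≤ c.Kt2 * δ2 * v ^ (-(c.mu + c.nu)) := by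
        rw [ae_restrict_iff' measurableSet_Ioi]
        refine ae_of_all _ fun v hv => ?_
        have hv0 : 0 < v := hr0.trans hv
        have hY : (0:ℝ) < v ^ c.nu := Real.rpow_pos_of_pos hv0 _
        rw [Real.norm_eq_abs, div_sub_div_same, abs_div, abs_of_pos hY, rpow_neg_add hv0,
          ← mul_div_assoc]
        gcongr
        have hl := (hA6 f2 hf2 g2 hg2 v (Set.Ioi_subset_Ici_self hv)).2.2
        rw [← hd2def] at hl
        linarith
      have hle := MeasureTheory.norm_integral_le_of_norm_le hgint hub
      rw [Real.norm_eq_abs] at hle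
      refine hle.trans ?_
      rw [MeasureTheory.integral_const_mul, int_Ioi_rpow_eq hmn hr0]
    have hfin : c.Kt1 * δ1 * (s0 ^ (-(c.mu + c.nu - 1)) / (c.mu + c.nu - 1))
        + c.Kt2 * δ2 * (r0 ^ (-(c.mu + c.nu - 1)) / (c.mu + c.nu - 1)) ≤ Htil c s0 r0 * δ := by
      have h3 : c.Kt1 * δ1 * s0 ^ (-(c.mu + c.nu - 1)) + c.Kt2 * δ2 * r0 ^ (-(c.mu + c.nu - 1))
          ≤ (c.Kt1 * s0 ^ (-(c.mu + c.nu - 1)) + c.Kt2 * r0 ^ (-(c.mu + c.nu - 1))) * δ := by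
        nlinarith [mul_nonneg (mul_nonneg hKt1.le (sub_nonneg.mpr hδ1le)) hs0q.le,
          mul_nonneg (mul_nonneg hKt2.le (sub_nonneg.mpr hδ2le)) hr0q.le]
      have e1 : c.Kt1 * δ1 * (s0 ^ (-(c.mu + c.nu - 1)) / (c.mu + c.nu - 1))
          + c.Kt2 * δ2 * (r0 ^ (-(c.mu + c.nu - 1)) / (c.mu + c.nu - 1))
          = (c.Kt1 * δ1 * s0 ^ (-(c.mu + c.nu - 1))
            + c.Kt2 * δ2 * r0 ^ (-(c.mu + c.nu - 1))) / (c.mu + c.nu - 1) := by ring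
      have e2 : Htil c s0 r0 * δ
          = (c.Kt1 * s0 ^ (-(c.mu + c.nu - 1)) + c.Kt2 * r0 ^ (-(c.mu + c.nu - 1))) * δ
            / (c.mu + c.nu - 1) := by
        unfold Htil; ring
      rw [e1, e2]
      gcongr
    have habs : ∀ a b a' b' : ℝ, |a + b - (a' + b')| ≤ |a - a'| + |b - b'| := by
      intro a b a' b'
      calc |a + b - (a' + b')| = |(a - a') + (b - b')| := by ring_nf
        _ ≤ |a - a'| + |b - b'| := abs_add_le _ _
    unfold Hf
    exact le_trans (habs _ _ _ _) (le_trans (add_le_add h1 h2) hfin)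
    -- main estimate
  have hHf1 := hHlow f1 hf1 f2 hf2
  have hHg1 := hHlow g1 hg1 g2 hg2
  have hHfpos : 0 < Hf c s0 r0 L1 N1 K1 L2 N2 K2 f1 f2 := lt_of_lt_of_le hHinfpos hHf1
  have hHgpos : 0 < Hf c s0 r0 L1 N1 K1 L2 N2 K2 g1 g2 := lt_of_lt_of_le hHinfpos hHg1
  set Hff := Hf c s0 r0 L1 N1 K1 L2 N2 K2 f1 f2 with hHffd
  set Hgg := Hf c s0 r0 L1 N1 K1 L2 N2 K2 g1 g2 with hHggd
  set Ff : ℝ → ℝ := fun v => 2 * c.a * v * (N2 f2 v / L2 f2 v)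
      + c.D2 / Hff * (K2 f2 v / (L2 f2 v * v ^ c.nu)) with hFfd
  set Fg : ℝ → ℝ := fun v => 2 * c.a * v * (N2 g2 v / L2 g2 v)
      + c.D2 / Hgg * (K2 g2 v / (L2 g2 v * v ^ c.nu)) with hFgd
  have hE2f : E2f c s0 r0 L1 N1 K1 L2 N2 K2 f1 f2 η = Real.exp (-(∫ v in r0..η, Ff v)) := by
    rw [hFfd, hHffd]; rfl
  have hE2g : E2f c s0 r0 L1 N1 K1 L2 N2 K2 g1 g2 η = Real.exp (-(∫ v in r0..η, Fg v)) := by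
    rw [hFgd, hHggd]; rfl
  rw [hE2f, hE2g]
  have hposIcc2 : ∀ x ∈ Set.Icc r0 η, (0:ℝ) < x := fun x hx => lt_of_lt_of_le hr0 hx.1
  have hsub2 : Set.Icc r0 η ⊆ Set.Ici r0 := fun x hx => hx.1
  have hu2 : Set.uIcc r0 η = Set.Icc r0 η := Set.uIcc_of_le hη'
  have hcf := hA2 f2 hf2
  have hcg := hA2 g2 hg2
  have hLfpos : ∀ x ∈ Set.Icc r0 η, 0 < L2 f2 x := fun x hx =>
    lt_of_lt_of_le (mul_pos hL2m (Real.rpow_pos_of_pos (hposIcc2 x hx) _))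
      (hA4 f2 hf2 x (hsub2 hx)).1
  have hLgpos : ∀ x ∈ Set.Icc r0 η, 0 < L2 g2 x := fun x hx =>
    lt_of_lt_of_le (mul_pos hL2m (Real.rpow_pos_of_pos (hposIcc2 x hx) _))
      (hA4 g2 hg2 x (hsub2 hx)).1
  have hYpos : ∀ x ∈ Set.Icc r0 η, (0:ℝ) < x ^ c.nu :=
    fun x hx => Real.rpow_pos_of_pos (hposIcc2 x hx) _
  have hcFf : ContinuousOn Ff (Set.Icc r0 η) := by
    rw [hFfd]
    apply ContinuousOn.add
    · exact (continuousOn_const.mul continuousOn_id).mul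
        ((hcf.2.1.mono hsub2).div (hcf.1.mono hsub2) fun x hx => (hLfpos x hx).ne')
    · exact continuousOn_const.mul ((hcf.2.2.mono hsub2).div
        ((hcf.1.mono hsub2).mul (contOn_rpow hposIcc2 _))
        fun x hx => (mul_pos (hLfpos x hx) (hYpos x hx)).ne')
  have hcFg : ContinuousOn Fg (Set.Icc r0 η) := by
    rw [hFgd]
    apply ContinuousOn.add
    · exact (continuousOn_const.mul continuousOn_id).mul
        ((hcg.2.1.mono hsub2).div (hcg.1.mono hsub2) fun x hx => (hLgpos x hx).ne')
    · exact continuousOn_const.mul ((hcg.2.2.mono hsub2).div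
        ((hcg.1.mono hsub2).mul (contOn_rpow hposIcc2 _))
        fun x hx => (mul_pos (hLgpos x hx) (hYpos x hx)).ne')
  have hiFf : IntervalIntegrable Ff volume r0 η := (hcFf.mono hu2.subset).intervalIntegrable
  have hiFg : IntervalIntegrable Fg volume r0 η := (hcFg.mono hu2.subset).intervalIntegrable
  have hFfnn : ∀ v ∈ Set.Icc r0 η, 0 ≤ Ff v := by
    intro v hv
    have hv0 := hposIcc2 v hv
    have hb := hA4 f2 hf2 v (hsub2 hv)
    have hXm : (0:ℝ) < v ^ (-c.mu) := Real.rpow_pos_of_pos hv0 _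
    have hNf : 0 ≤ N2 f2 v := le_trans (mul_nonneg hN2m.le hXm.le) hb.2.2.1
    have hKf : 0 ≤ K2 f2 v := le_trans (mul_nonneg hK2m.le hXm.le) hb.2.2.2.2.1
    simp only [hFfd]
    refine add_nonneg (mul_nonneg ?_ (div_nonneg hNf (hLfpos v hv).le))
      (mul_nonneg (div_nonneg hD2.le hHfpos.le)
        (div_nonneg hKf (mul_nonneg (hLfpos v hv).le (hYpos v hv).le)))
    exact (mul_pos (mul_pos (by norm_num : (0:ℝ)<2) ha) hv0).le
  have hFgnn : ∀ v ∈ Set.Icc r0 η, 0 ≤ Fg v := by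
    intro v hv
    have hv0 := hposIcc2 v hv
    have hb := hA4 g2 hg2 v (hsub2 hv)
    have hXm : (0:ℝ) < v ^ (-c.mu) := Real.rpow_pos_of_pos hv0 _
    have hNf : 0 ≤ N2 g2 v := le_trans (mul_nonneg hN2m.le hXm.le) hb.2.2.1
    have hKf : 0 ≤ K2 g2 v := le_trans (mul_nonneg hK2m.le hXm.le) hb.2.2.2.2.1
    simp only [hFgd]
    refine add_nonneg (mul_nonneg ?_ (div_nonneg hNf (hLgpos v hv).le))
      (mul_nonneg (div_nonneg hD2.le hHgpos.le)
        (div_nonneg hKf (mul_nonneg (hLgpos v hv).le (hYpos v hv).le)))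
    exact (mul_pos (mul_pos (by norm_num : (0:ℝ)<2) ha) hv0).le
  have hAf : 0 ≤ ∫ v in r0..η, Ff v := intervalIntegral.integral_nonneg hη' hFfnn
  have hAg : 0 ≤ ∫ v in r0..η, Fg v := intervalIntegral.integral_nonneg hη' hFgnn
  -- pointwise bound
  have hpt : ∀ v ∈ Set.Icc r0 η, |Ff v - Fg v|
      ≤ 2*c.a*c.Nt2/c.L2m*δ2 * v ^ (-(c.mu-1))
        + 2*c.a*c.N2M*c.Lt2/c.L2m^2*δ2 * v ^ (-(3*c.mu-1))
        + (c.D2*c.Kt2/(Hinf c s0 r0*c.L2m)*δ2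
            + c.D2*c.K2M*Htil c s0 r0/(Hinf c s0 r0^2*c.L2m)*δ) * v ^ (-(2*c.mu+c.nu))
        + c.D2*c.K2M*c.Lt2/(Hinf c s0 r0*c.L2m^2)*δ2 * v ^ (-(3*c.mu+c.nu)) := by
    intro v hv
    have hv0 : 0 < v := hposIcc2 v hv
    have hvI : v ∈ Set.Ici r0 := hsub2 hv
    obtain ⟨hLfl, hLfu, hNfl, hNfu, hKfl, hKfu⟩ := hA4 f2 hf2 v hvI
    obtain ⟨hLgl, hLgu, hNgl, hNgu, hKgl, hKgu⟩ := hA4 g2 hg2 v hvI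
    obtain ⟨hLlip, hNlip, hKlip⟩ := hA6 f2 hf2 g2 hg2 v hvI
    rw [← hd2def] at hLlip hNlip hKlip
    have hX : (0:ℝ) < v ^ c.mu := Real.rpow_pos_of_pos hv0 _
    have hY : (0:ℝ) < v ^ c.nu := Real.rpow_pos_of_pos hv0 _
    have hXm : (0:ℝ) < v ^ (-c.mu) := Real.rpow_pos_of_pos hv0 _
    have hLf : 0 < L2 f2 v := hLfpos v hv
    have hLg : 0 < L2 g2 v := hLgpos v hv
    have hL2X : (0:ℝ) < c.L2m * v ^ c.mu := mul_pos hL2m hX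
    have hNg0 : 0 ≤ N2 g2 v := le_trans (mul_nonneg hN2m.le hXm.le) hNgl
    have hKg0 : 0 ≤ K2 g2 v := le_trans (mul_nonneg hK2m.le hXm.le) hKgl
    have hNgu' : |N2 g2 v| ≤ c.N2M * v ^ (-c.mu) := by rw [abs_of_nonneg hNg0]; exact hNgu
    have hKgu' : |K2 g2 v| ≤ c.K2M * v ^ (-c.mu) := by rw [abs_of_nonneg hKg0]; exact hKgu
    have hXinv : v ^ (-c.mu) = (v ^ c.mu)⁻¹ := Real.rpow_neg hv0.le _
    have hid1 : v ^ (-(c.mu - 1)) = v * (v ^ c.mu)⁻¹ := by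
      rw [show -(c.mu - 1) = 1 + -c.mu by ring, Real.rpow_add hv0, Real.rpow_one,
        Real.rpow_neg hv0.le]
    have hid2 : v ^ (-(3*c.mu - 1)) = v * (v ^ c.mu)⁻¹ * (v ^ c.mu)⁻¹ * (v ^ c.mu)⁻¹ := by
      rw [show -(3*c.mu - 1) = 1 + -c.mu + -c.mu + -c.mu by ring, Real.rpow_add hv0,
        Real.rpow_add hv0, Real.rpow_add hv0, Real.rpow_one, Real.rpow_neg hv0.le]
    have hid3 : v ^ (-(2*c.mu + c.nu)) = (v ^ c.mu)⁻¹ * (v ^ c.mu)⁻¹ * (v ^ c.nu)⁻¹ := by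
      rw [show -(2*c.mu + c.nu) = -c.mu + -c.mu + -c.nu by ring, Real.rpow_add hv0,
        Real.rpow_add hv0, Real.rpow_neg hv0.le, Real.rpow_neg hv0.le c.nu]
    have hid4 : v ^ (-(3*c.mu + c.nu))
        = (v ^ c.mu)⁻¹ * (v ^ c.mu)⁻¹ * (v ^ c.mu)⁻¹ * (v ^ c.nu)⁻¹ := by
      rw [show -(3*c.mu + c.nu) = -c.mu + -c.mu + -c.mu + -c.nu by ring, Real.rpow_add hv0,
        Real.rpow_add hv0, Real.rpow_add hv0, Real.rpow_neg hv0.le, Real.rpow_neg hv0.le c.nu]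
    have hav : (0:ℝ) < 2 * c.a * v := mul_pos (mul_pos (by norm_num) ha) hv0
    have T1 : |2 * c.a * v * (N2 f2 v / L2 f2 v) - 2 * c.a * v * (N2 g2 v / L2 g2 v)|
        ≤ 2*c.a*c.Nt2/c.L2m*δ2 * v ^ (-(c.mu-1))
          + 2*c.a*c.N2M*c.Lt2/c.L2m^2*δ2 * v ^ (-(3*c.mu-1)) := by
      have e1 : N2 f2 v / L2 f2 v - N2 g2 v / L2 g2 v
          = (N2 f2 v - N2 g2 v) / L2 f2 v
            + N2 g2 v * (L2 g2 v - L2 f2 v) / (L2 f2 v * L2 g2 v) := by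
        field_simp
        ring
      have t1 : |N2 f2 v / L2 f2 v - N2 g2 v / L2 g2 v|
          ≤ c.Nt2 * δ2 / (c.L2m * v ^ c.mu)
            + c.N2M * v ^ (-c.mu) * (c.Lt2 * δ2)
              / (c.L2m * v ^ c.mu * (c.L2m * v ^ c.mu)) := by
        rw [e1]
        refine (abs_add_le _ _).trans (add_le_add ?_ ?_)
        · rw [abs_div, abs_of_pos hLf]
          exact div_le_div₀ (mul_nonneg hNt2.le hδ2nn) hNlip hL2X hLfl
        · rw [abs_div, abs_of_pos (mul_pos hLf hLg), abs_mul]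
          refine div_le_div₀ (mul_nonneg (mul_nonneg hN2M.le hXm.le)
              (mul_nonneg hLt2.le hδ2nn)) ?_ (mul_pos hL2X hL2X)
              (mul_le_mul hLfl hLgl hL2X.le hLf.le)
          refine mul_le_mul hNgu' ?_ (abs_nonneg _) (mul_nonneg hN2M.le hXm.le)
          rw [abs_sub_comm]; exact hLlip
      calc |2 * c.a * v * (N2 f2 v / L2 f2 v) - 2 * c.a * v * (N2 g2 v / L2 g2 v)|
          = 2 * c.a * v * |N2 f2 v / L2 f2 v - N2 g2 v / L2 g2 v| := by
            rw [← mul_sub, abs_mul, abs_of_pos hav]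
        _ ≤ 2 * c.a * v * (c.Nt2 * δ2 / (c.L2m * v ^ c.mu)
              + c.N2M * v ^ (-c.mu) * (c.Lt2 * δ2)
                / (c.L2m * v ^ c.mu * (c.L2m * v ^ c.mu))) :=
            mul_le_mul_of_nonneg_left t1 hav.le
        _ = 2*c.a*c.Nt2/c.L2m*δ2 * v ^ (-(c.mu-1))
              + 2*c.a*c.N2M*c.Lt2/c.L2m^2*δ2 * v ^ (-(3*c.mu-1)) := by
            rw [hid1, hid2, hXinv]
            field_simp
    have T2 : |c.D2 / Hff * (K2 f2 v / (L2 f2 v * v ^ c.nu))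
          - c.D2 / Hgg * (K2 g2 v / (L2 g2 v * v ^ c.nu))|
        ≤ (c.D2*c.Kt2/(Hinf c s0 r0*c.L2m)*δ2
            + c.D2*c.K2M*Htil c s0 r0/(Hinf c s0 r0^2*c.L2m)*δ) * v ^ (-(2*c.mu+c.nu))
          + c.D2*c.K2M*c.Lt2/(Hinf c s0 r0*c.L2m^2)*δ2 * v ^ (-(3*c.mu+c.nu)) := by
      have e2 : c.D2 / Hff * (K2 f2 v / (L2 f2 v * v ^ c.nu))
            - c.D2 / Hgg * (K2 g2 v / (L2 g2 v * v ^ c.nu))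
          = c.D2 * ((K2 f2 v - K2 g2 v) / (Hff * (L2 f2 v * v ^ c.nu))
            + K2 g2 v * (Hgg - Hff) / (Hff * (Hgg * (L2 f2 v * v ^ c.nu)))
            + K2 g2 v * (L2 g2 v - L2 f2 v)
                / (Hgg * (L2 f2 v * (L2 g2 v * v ^ c.nu)))) := by
        field_simp
        ring
      have b1 : |(K2 f2 v - K2 g2 v) / (Hff * (L2 f2 v * v ^ c.nu))|
          ≤ c.Kt2 * v ^ (-c.mu) * δ2
              / (Hinf c s0 r0 * (c.L2m * v ^ c.mu * v ^ c.nu)) := by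
        rw [abs_div, abs_of_pos (mul_pos hHfpos (mul_pos hLf hY))]
        exact div_le_div₀ (mul_nonneg (mul_nonneg hKt2.le hXm.le) hδ2nn) hKlip
          (mul_pos hHinfpos (mul_pos hL2X hY))
          (mul_le_mul hHf1 (mul_le_mul_of_nonneg_right hLfl hY.le)
            (mul_nonneg hL2X.le hY.le) hHfpos.le)
      have b2 : |K2 g2 v * (Hgg - Hff) / (Hff * (Hgg * (L2 f2 v * v ^ c.nu)))|
          ≤ c.K2M * v ^ (-c.mu) * (Htil c s0 r0 * δ)
              / (Hinf c s0 r0 * (Hinf c s0 r0 * (c.L2m * v ^ c.mu * v ^ c.nu))) := by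
        rw [abs_div, abs_of_pos (mul_pos hHfpos (mul_pos hHgpos (mul_pos hLf hY))), abs_mul]
        refine div_le_div₀ (mul_nonneg (mul_nonneg hK2M.le hXm.le)
            (mul_nonneg hHtnn hδnn)) ?_
            (mul_pos hHinfpos (mul_pos hHinfpos (mul_pos hL2X hY))) ?_
        · refine mul_le_mul hKgu' ?_ (abs_nonneg _) (mul_nonneg hK2M.le hXm.le)
          rw [abs_sub_comm]; exact hHlip
        · exact mul_le_mul hHf1 (mul_le_mul hHg1
            (mul_le_mul_of_nonneg_right hLfl hY.le)
            (mul_nonneg hL2X.le hY.le) hHgpos.le)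
            (mul_nonneg hHinfpos.le (mul_nonneg hL2X.le hY.le)) hHfpos.le
      have b3 : |K2 g2 v * (L2 g2 v - L2 f2 v)
            / (Hgg * (L2 f2 v * (L2 g2 v * v ^ c.nu)))|
          ≤ c.K2M * v ^ (-c.mu) * (c.Lt2 * δ2)
              / (Hinf c s0 r0 * (c.L2m * v ^ c.mu * (c.L2m * v ^ c.mu * v ^ c.nu))) := by
        rw [abs_div, abs_of_pos (mul_pos hHgpos (mul_pos hLf (mul_pos hLg hY))), abs_mul]
        refine div_le_div₀ (mul_nonneg (mul_nonneg hK2M.le hXm.le)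
            (mul_nonneg hLt2.le hδ2nn)) ?_
            (mul_pos hHinfpos (mul_pos hL2X (mul_pos hL2X hY))) ?_
        · refine mul_le_mul hKgu' ?_ (abs_nonneg _) (mul_nonneg hK2M.le hXm.le)
          rw [abs_sub_comm]; exact hLlip
        · exact mul_le_mul hHg1 (mul_le_mul hLfl
            (mul_le_mul_of_nonneg_right hLgl hY.le)
            (mul_nonneg hL2X.le hY.le) hLf.le)
            (mul_nonneg hL2X.le (mul_nonneg hL2X.le hY.le)) hHgpos.le
      calc |c.D2 / Hff * (K2 f2 v / (L2 f2 v * v ^ c.nu))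
            - c.D2 / Hgg * (K2 g2 v / (L2 g2 v * v ^ c.nu))|
          = c.D2 * |(K2 f2 v - K2 g2 v) / (Hff * (L2 f2 v * v ^ c.nu))
            + K2 g2 v * (Hgg - Hff) / (Hff * (Hgg * (L2 f2 v * v ^ c.nu)))
            + K2 g2 v * (L2 g2 v - L2 f2 v)
                / (Hgg * (L2 f2 v * (L2 g2 v * v ^ c.nu)))| := by
            rw [e2, abs_mul, abs_of_pos hD2]
        _ ≤ c.D2 * (|(K2 f2 v - K2 g2 v) / (Hff * (L2 f2 v * v ^ c.nu))|
            + |K2 g2 v * (Hgg - Hff) / (Hff * (Hgg * (L2 f2 v * v ^ c.nu)))|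
            + |K2 g2 v * (L2 g2 v - L2 f2 v)
                / (Hgg * (L2 f2 v * (L2 g2 v * v ^ c.nu)))|) :=
            mul_le_mul_of_nonneg_left (abs_add_three _ _ _) hD2.le
        _ ≤ c.D2 * (c.Kt2 * v ^ (-c.mu) * δ2
              / (Hinf c s0 r0 * (c.L2m * v ^ c.mu * v ^ c.nu))
            + c.K2M * v ^ (-c.mu) * (Htil c s0 r0 * δ)
              / (Hinf c s0 r0 * (Hinf c s0 r0 * (c.L2m * v ^ c.mu * v ^ c.nu)))
            + c.K2M * v ^ (-c.mu) * (c.Lt2 * δ2)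
              / (Hinf c s0 r0 * (c.L2m * v ^ c.mu * (c.L2m * v ^ c.mu * v ^ c.nu)))) :=
            mul_le_mul_of_nonneg_left (add_le_add (add_le_add b1 b2) b3) hD2.le
        _ = (c.D2*c.Kt2/(Hinf c s0 r0*c.L2m)*δ2
              + c.D2*c.K2M*Htil c s0 r0/(Hinf c s0 r0^2*c.L2m)*δ) * v ^ (-(2*c.mu+c.nu))
            + c.D2*c.K2M*c.Lt2/(Hinf c s0 r0*c.L2m^2)*δ2 * v ^ (-(3*c.mu+c.nu)) := by
            rw [hid3, hid4, hXinv]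
            field_simp
    have hsplit : Ff v - Fg v
        = (2 * c.a * v * (N2 f2 v / L2 f2 v) - 2 * c.a * v * (N2 g2 v / L2 g2 v))
          + (c.D2 / Hff * (K2 f2 v / (L2 f2 v * v ^ c.nu))
            - c.D2 / Hgg * (K2 g2 v / (L2 g2 v * v ^ c.nu))) := by
      simp only [hFfd, hFgd]
      ring
    calc |Ff v - Fg v|
        ≤ |2 * c.a * v * (N2 f2 v / L2 f2 v) - 2 * c.a * v * (N2 g2 v / L2 g2 v)|
          + |c.D2 / Hff * (K2 f2 v / (L2 f2 v * v ^ c.nu))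
            - c.D2 / Hgg * (K2 g2 v / (L2 g2 v * v ^ c.nu))| := by
          rw [hsplit]; exact abs_add_le _ _
      _ ≤ (2*c.a*c.Nt2/c.L2m*δ2 * v ^ (-(c.mu-1))
            + 2*c.a*c.N2M*c.Lt2/c.L2m^2*δ2 * v ^ (-(3*c.mu-1)))
          + ((c.D2*c.Kt2/(Hinf c s0 r0*c.L2m)*δ2
              + c.D2*c.K2M*Htil c s0 r0/(Hinf c s0 r0^2*c.L2m)*δ) * v ^ (-(2*c.mu+c.nu))
            + c.D2*c.K2M*c.Lt2/(Hinf c s0 r0*c.L2m^2)*δ2 * v ^ (-(3*c.mu+c.nu))) :=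
          add_le_add T1 T2
      _ = _ := by ring
  -- interval integrabilities of the bound pieces
  have hiB1 : IntervalIntegrable
      (fun v => 2*c.a*c.Nt2/c.L2m*δ2 * v ^ (-(c.mu-1))) volume r0 η :=
    ((continuousOn_const.mul (contOn_rpow hposIcc2 _)).mono hu2.subset).intervalIntegrable
  have hiB2 : IntervalIntegrable
      (fun v => 2*c.a*c.N2M*c.Lt2/c.L2m^2*δ2 * v ^ (-(3*c.mu-1))) volume r0 η :=
    ((continuousOn_const.mul (contOn_rpow hposIcc2 _)).mono hu2.subset).intervalIntegrable
  have hiB3 : IntervalIntegrable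
      (fun v => (c.D2*c.Kt2/(Hinf c s0 r0*c.L2m)*δ2
        + c.D2*c.K2M*Htil c s0 r0/(Hinf c s0 r0^2*c.L2m)*δ) * v ^ (-(2*c.mu+c.nu)))
      volume r0 η :=
    ((continuousOn_const.mul (contOn_rpow hposIcc2 _)).mono hu2.subset).intervalIntegrable
  have hiB4 : IntervalIntegrable
      (fun v => c.D2*c.K2M*c.Lt2/(Hinf c s0 r0*c.L2m^2)*δ2 * v ^ (-(3*c.mu+c.nu)))
      volume r0 η :=
    ((continuousOn_const.mul (contOn_rpow hposIcc2 _)).mono hu2.subset).intervalIntegrable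
  have hiAbs : IntervalIntegrable (fun v => |Ff v - Fg v|) volume r0 η :=
    (((hcFf.sub hcFg).abs).mono hu2.subset).intervalIntegrable
  have key : |(∫ v in r0..η, Ff v) - ∫ v in r0..η, Fg v| ≤ E2til c s0 r0 * δ := by
    rw [← intervalIntegral.integral_sub hiFf hiFg]
    have i1 := int_rpow_le (show (1:ℝ) < c.mu - 1 by linarith) hr0 hη'
    have i2 := int_rpow_le (show (1:ℝ) < 3*c.mu - 1 by linarith) hr0 hη'
    have i3 := int_rpow_le (show (1:ℝ) < 2*c.mu + c.nu by linarith) hr0 hη'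
    have i4 := int_rpow_le (show (1:ℝ) < 3*c.mu + c.nu by linarith) hr0 hη'
    rw [show c.mu - 1 - 1 = c.mu - 2 by ring] at i1
    rw [show 3*c.mu - 1 - 1 = 3*c.mu - 2 by ring] at i2
    have hp1 : (0:ℝ) < (c.mu-2) * r0 ^ (c.mu-2) :=
      mul_pos (by linarith) (Real.rpow_pos_of_pos hr0 _)
    have hp2 : (0:ℝ) < (3*c.mu-2) * r0 ^ (3*c.mu-2) :=
      mul_pos (by linarith) (Real.rpow_pos_of_pos hr0 _)
    have hp3 : (0:ℝ) < (2*c.mu+c.nu-1) * r0 ^ (2*c.mu+c.nu-1) :=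
      mul_pos (by linarith) (Real.rpow_pos_of_pos hr0 _)
    have hp4 : (0:ℝ) < (3*c.mu+c.nu-1) * r0 ^ (3*c.mu+c.nu-1) :=
      mul_pos (by linarith) (Real.rpow_pos_of_pos hr0 _)
    have hcc1 : (0:ℝ) ≤ 2*c.a*c.Nt2/c.L2m :=
      div_nonneg (mul_nonneg (mul_nonneg (by norm_num) ha.le) hNt2.le) hL2m.le
    have hcc2 : (0:ℝ) ≤ 2*c.a*c.N2M*c.Lt2/c.L2m^2 :=
      div_nonneg (mul_nonneg (mul_nonneg (mul_nonneg (by norm_num) ha.le) hN2M.le) hLt2.le)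
        (pow_nonneg hL2m.le 2)
    have hcc3 : (0:ℝ) ≤ c.D2*c.Kt2/(Hinf c s0 r0*c.L2m) :=
      div_nonneg (mul_nonneg hD2.le hKt2.le) (mul_nonneg hHinfpos.le hL2m.le)
    have hcc3' : (0:ℝ) ≤ c.D2*c.K2M*Htil c s0 r0/(Hinf c s0 r0^2*c.L2m) :=
      div_nonneg (mul_nonneg (mul_nonneg hD2.le hK2M.le) hHtnn)
        (mul_nonneg (pow_nonneg hHinfpos.le 2) hL2m.le)
    have hcc4 : (0:ℝ) ≤ c.D2*c.K2M*c.Lt2/(Hinf c s0 r0*c.L2m^2) :=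
      div_nonneg (mul_nonneg (mul_nonneg hD2.le hK2M.le) hLt2.le)
        (mul_nonneg hHinfpos.le (pow_nonneg hL2m.le 2))
    have hc1 : (0:ℝ) ≤ 2*c.a*c.Nt2/c.L2m*δ2 := mul_nonneg hcc1 hδ2nn
    have hc2 : (0:ℝ) ≤ 2*c.a*c.N2M*c.Lt2/c.L2m^2*δ2 := mul_nonneg hcc2 hδ2nn
    have hc3 : (0:ℝ) ≤ c.D2*c.Kt2/(Hinf c s0 r0*c.L2m)*δ2
        + c.D2*c.K2M*Htil c s0 r0/(Hinf c s0 r0^2*c.L2m)*δ :=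
      add_nonneg (mul_nonneg hcc3 hδ2nn) (mul_nonneg hcc3' hδnn)
    have hc4 : (0:ℝ) ≤ c.D2*c.K2M*c.Lt2/(Hinf c s0 r0*c.L2m^2)*δ2 := mul_nonneg hcc4 hδ2nn
    have hq1 : (0:ℝ) ≤ 1/((c.mu-2)*r0^(c.mu-2)) := div_nonneg zero_le_one hp1.le
    have hq2 : (0:ℝ) ≤ 1/((3*c.mu-2)*r0^(3*c.mu-2)) := div_nonneg zero_le_one hp2.le
    have hq3 : (0:ℝ) ≤ 1/((2*c.mu+c.nu-1)*r0^(2*c.mu+c.nu-1)) := div_nonneg zero_le_one hp3.le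
    have hq4 : (0:ℝ) ≤ 1/((3*c.mu+c.nu-1)*r0^(3*c.mu+c.nu-1)) := div_nonneg zero_le_one hp4.le
    calc |∫ v in r0..η, (Ff v - Fg v)|
        ≤ ∫ v in r0..η, |Ff v - Fg v| :=
          intervalIntegral.abs_integral_le_integral_abs hη'
      _ ≤ ∫ v in r0..η, (2*c.a*c.Nt2/c.L2m*δ2 * v ^ (-(c.mu-1))
            + 2*c.a*c.N2M*c.Lt2/c.L2m^2*δ2 * v ^ (-(3*c.mu-1))
            + (c.D2*c.Kt2/(Hinf c s0 r0*c.L2m)*δ2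
                + c.D2*c.K2M*Htil c s0 r0/(Hinf c s0 r0^2*c.L2m)*δ) * v ^ (-(2*c.mu+c.nu))
            + c.D2*c.K2M*c.Lt2/(Hinf c s0 r0*c.L2m^2)*δ2 * v ^ (-(3*c.mu+c.nu))) :=
          intervalIntegral.integral_mono_on hη' hiAbs
            (((hiB1.add hiB2).add hiB3).add hiB4) hpt
      _ = 2*c.a*c.Nt2/c.L2m*δ2 * (∫ v in r0..η, v ^ (-(c.mu-1)))
          + 2*c.a*c.N2M*c.Lt2/c.L2m^2*δ2 * (∫ v in r0..η, v ^ (-(3*c.mu-1)))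
          + (c.D2*c.Kt2/(Hinf c s0 r0*c.L2m)*δ2
              + c.D2*c.K2M*Htil c s0 r0/(Hinf c s0 r0^2*c.L2m)*δ)
            * (∫ v in r0..η, v ^ (-(2*c.mu+c.nu)))
          + c.D2*c.K2M*c.Lt2/(Hinf c s0 r0*c.L2m^2)*δ2
            * (∫ v in r0..η, v ^ (-(3*c.mu+c.nu))) := by
          rw [intervalIntegral.integral_add ((hiB1.add hiB2).add hiB3) hiB4,
            intervalIntegral.integral_add (hiB1.add hiB2) hiB3,
            intervalIntegral.integral_add hiB1 hiB2,
            intervalIntegral.integral_const_mul, intervalIntegral.integral_const_mul,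
            intervalIntegral.integral_const_mul, intervalIntegral.integral_const_mul]
      _ ≤ 2*c.a*c.Nt2/c.L2m*δ2 * (1/((c.mu-2)*r0^(c.mu-2)))
          + 2*c.a*c.N2M*c.Lt2/c.L2m^2*δ2 * (1/((3*c.mu-2)*r0^(3*c.mu-2)))
          + (c.D2*c.Kt2/(Hinf c s0 r0*c.L2m)*δ2
              + c.D2*c.K2M*Htil c s0 r0/(Hinf c s0 r0^2*c.L2m)*δ)
            * (1/((2*c.mu+c.nu-1)*r0^(2*c.mu+c.nu-1)))
          + c.D2*c.K2M*c.Lt2/(Hinf c s0 r0*c.L2m^2)*δ2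
            * (1/((3*c.mu+c.nu-1)*r0^(3*c.mu+c.nu-1))) :=
          add_le_add (add_le_add (add_le_add
            (mul_le_mul_of_nonneg_left i1 hc1) (mul_le_mul_of_nonneg_left i2 hc2))
            (mul_le_mul_of_nonneg_left i3 hc3)) (mul_le_mul_of_nonneg_left i4 hc4)
      _ ≤ E2til c s0 r0 * δ := by
          have hm2 : (c.mu - 2 : ℝ) ≠ 0 := (show (0:ℝ) < c.mu - 2 by linarith).ne'
          have hm3 : (3*c.mu - 2 : ℝ) ≠ 0 := (show (0:ℝ) < 3*c.mu - 2 by linarith).ne'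
          have hm4 : (2*c.mu + c.nu - 1 : ℝ) ≠ 0 :=
            (show (0:ℝ) < 2*c.mu + c.nu - 1 by linarith).ne'
          have hm5 : (3*c.mu + c.nu - 1 : ℝ) ≠ 0 :=
            (show (0:ℝ) < 3*c.mu + c.nu - 1 by linarith).ne'
          have hr1 : (r0:ℝ) ^ (c.mu-2) ≠ 0 := (Real.rpow_pos_of_pos hr0 _).ne'
          have hr2 : (r0:ℝ) ^ (3*c.mu-2) ≠ 0 := (Real.rpow_pos_of_pos hr0 _).ne'
          have hr3 : (r0:ℝ) ^ (2*c.mu+c.nu-1) ≠ 0 := (Real.rpow_pos_of_pos hr0 _).ne'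
          have hr4 : (r0:ℝ) ^ (3*c.mu+c.nu-1) ≠ 0 := (Real.rpow_pos_of_pos hr0 _).ne'
          have e : E2til c s0 r0 * δ
              = 2*c.a*c.Nt2/c.L2m*δ * (1/((c.mu-2)*r0^(c.mu-2)))
              + 2*c.a*c.N2M*c.Lt2/c.L2m^2*δ * (1/((3*c.mu-2)*r0^(3*c.mu-2)))
              + (c.D2*c.Kt2/(Hinf c s0 r0*c.L2m)*δ
                  + c.D2*c.K2M*Htil c s0 r0/(Hinf c s0 r0^2*c.L2m)*δ)
                * (1/((2*c.mu+c.nu-1)*r0^(2*c.mu+c.nu-1)))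
              + c.D2*c.K2M*c.Lt2/(Hinf c s0 r0*c.L2m^2)*δ
                * (1/((3*c.mu+c.nu-1)*r0^(3*c.mu+c.nu-1))) := by
            unfold E2til
            field_simp
            ring
          rw [e]
          refine add_le_add (add_le_add (add_le_add
            (mul_le_mul_of_nonneg_right (mul_le_mul_of_nonneg_left hδ2le hcc1) hq1)
            (mul_le_mul_of_nonneg_right (mul_le_mul_of_nonneg_left hδ2le hcc2) hq2))
            (mul_le_mul_of_nonneg_right
              (add_le_add (mul_le_mul_of_nonneg_left hδ2le hcc3) (le_refl _)) hq3))
            (mul_le_mul_of_nonneg_right (mul_le_mul_of_nonneg_left hδ2le hcc4) hq4)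
  exact (exp_lip hAf hAg).trans key
end
end

section
/- Under assumptions (A1)–(A4) with μ > 2, for every (f1,f2), (g1,g2) ∈ 𝒦 and every η ≥ r0 one has (E2inf/(L2M·(μ+ν−1)))·(r0^(−(μ+ν−1)) − η^(−(μ+ν−1))) ≤ Φ2(η; f1,f2) ≤ 1/(L2m·(μ+ν−1)·r0^(μ+ν−1)), and |Φ2(η; f1,f2) − Φ2(η; g1,g2)| ≤ Φ̃2·‖(f1,f2) − (g1,g2)‖, where Φ̃2 = Ẽ2/(L2m·(μ+ν−1)·r0^(μ+ν−1)) + L̃2/(L2m²·(2μ+ν−1)·r0^(2μ+ν−1)), E2inf = exp(−[a·N2M/(L2m·(μ−1)·r0^(2μ−2)) + D2·K2M/(H_inf·L2m·(2μ+ν−1)·r0^(2μ+ν−1))]), Ẽ2 = 2a·[Ñ2/(L2m·(μ−2)·r0^(μ−2)) + N2M·L̃2/(L2m²·(3μ−2)·r0^(3μ−2))] + D2·[K̃2/(H_inf·L2m·(2μ+ν−1)·r0^(2μ+ν−1)) + (K2M/(H_inf·L2m))·(H̃/(H_inf·(2μ+ν−1)·r0^(2μ+ν−1)) + L̃2/(L2m·(3μ+ν−1)·r0^(3μ+ν−1)))],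 H_inf = (K1m/(μ+ν−1))·(s0^(−(μ+ν−1)) − r0^(−(μ+ν−1))), and H̃ = (K̃1·s0^(−(μ+ν−1)) + K̃2·r0^(−(μ+ν−1)))/(μ+ν−1). -/
open MeasureTheory Filter Topology

noncomputable section

noncomputable section

lemma auxP_rpow_int_eq {r0 η p : ℝ} (h0 : 0 < r0) (hr : r0 ≤ η) (hp : 1 < p) :
    ∫ v in r0..η, v ^ (-p) = (r0 ^ (1-p) - η ^ (1-p)) / (p-1) := by
  rw [integral_rpow (Or.inr ⟨by intro h; simp at h; linarith,
    by rw [Set.uIcc_of_le hr]; exact fun h => absurd h.1 (by linarith)⟩)]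
  rw [show -p + 1 = 1 - p by ring]
  rw [div_eq_div_iff (by intro h; apply (by linarith : (1:ℝ) - p ≠ 0); linarith) (by intro h; linarith)]
  ring

lemma auxP_contOn {r0 η p : ℝ} (h0 : 0 < r0) (hr : r0 ≤ η) :
    ContinuousOn (fun v : ℝ => v ^ (-p)) (Set.uIcc r0 η) := by
  apply ContinuousOn.rpow_const continuousOn_id
  intro x hx
  rw [Set.uIcc_of_le hr] at hx
  exact Or.inl (ne_of_gt (lt_of_lt_of_le h0 hx.1))

lemma auxP_ii {r0 η p C : ℝ} (h0 : 0 < r0) (hr : r0 ≤ η) :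
    IntervalIntegrable (fun v : ℝ => C * v ^ (-p)) volume r0 η :=
  (continuousOn_const.mul (auxP_contOn h0 hr)).intervalIntegrable

lemma auxP_int_pow_le {r0 η p C : ℝ} (h0 : 0 < r0) (hr : r0 ≤ η) (hp : 1 < p) (hC : 0 ≤ C) :
    ∫ v in r0..η, C * v ^ (-p) ≤ C / ((p-1) * r0 ^ (p-1)) := by
  rw [intervalIntegral.integral_const_mul, auxP_rpow_int_eq h0 hr hp]
  have h1 : (0:ℝ) ≤ η ^ (1-p) := Real.rpow_nonneg (by linarith) _
  have h2 : r0 ^ (1-p) = (r0 ^ (p-1))⁻¹ := by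
    rw [show (1:ℝ) - p = -(p-1) by ring, Real.rpow_neg h0.le]
  have h3 : (0:ℝ) < r0 ^ (p-1) := Real.rpow_pos_of_pos h0 _
  calc C * ((r0 ^ (1-p) - η ^ (1-p)) / (p-1)) ≤ C * (r0 ^ (1-p) / (p-1)) := by
        apply mul_le_mul_of_nonneg_left _ hC
        apply div_le_div_of_nonneg_right ?_ (by linarith)
        · linarith
      _ = C / ((p-1) * r0 ^ (p-1)) := by
        rw [h2]; field_simp

lemma auxP_int_le {f : ℝ → ℝ} {r0 η p C : ℝ} (h0 : 0 < r0) (hr : r0 ≤ η) (hp : 1 < p)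
    (hC : 0 ≤ C) (hf : IntervalIntegrable f volume r0 η)
    (hb : ∀ v ∈ Set.Icc r0 η, f v ≤ C * v ^ (-p)) :
    ∫ v in r0..η, f v ≤ C / ((p-1) * r0 ^ (p-1)) :=
  (intervalIntegral.integral_mono_on hr hf (auxP_ii h0 hr) hb).trans
    (auxP_int_pow_le h0 hr hp hC)

lemma auxP_int_ge {f : ℝ → ℝ} {r0 η p C : ℝ} (h0 : 0 < r0) (hr : r0 ≤ η) (hp : 1 < p)
    (hf : IntervalIntegrable f volume r0 η)
    (hb : ∀ v ∈ Set.Icc r0 η, C * v ^ (-p) ≤ f v) :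
    C * ((r0 ^ (1-p) - η ^ (1-p)) / (p-1)) ≤ ∫ v in r0..η, f v := by
  have := intervalIntegral.integral_mono_on hr (auxP_ii h0 hr) hf hb
  rwa [intervalIntegral.integral_const_mul, auxP_rpow_int_eq h0 hr hp] at this

lemma auxP_int_abs {f : ℝ → ℝ} {r0 η p C : ℝ} (h0 : 0 < r0) (hr : r0 ≤ η) (hp : 1 < p)
    (hC : 0 ≤ C) (hf : IntervalIntegrable f volume r0 η)
    (hb : ∀ v ∈ Set.Icc r0 η, |f v| ≤ C * v ^ (-p)) :
    |∫ v in r0..η, f v| ≤ C / ((p-1) * r0 ^ (p-1)) :=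
  (intervalIntegral.abs_integral_le_integral_abs hr).trans
    (auxP_int_le h0 hr hp hC hf.abs hb)

lemma auxP_int_abs2 {f : ℝ → ℝ} {r0 η p1 p2 C1 C2 : ℝ} (h0 : 0 < r0) (hr : r0 ≤ η)
    (hp1 : 1 < p1) (hp2 : 1 < p2) (hC1 : 0 ≤ C1) (hC2 : 0 ≤ C2)
    (hf : IntervalIntegrable f volume r0 η)
    (hb : ∀ v ∈ Set.Icc r0 η, |f v| ≤ C1 * v ^ (-p1) + C2 * v ^ (-p2)) :
    |∫ v in r0..η, f v| ≤ C1 / ((p1-1) * r0 ^ (p1-1)) + C2 / ((p2-1) * r0 ^ (p2-1)) := by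
  have h1 : IntervalIntegrable (fun v : ℝ => C1 * v ^ (-p1)) volume r0 η := auxP_ii h0 hr
  have h2 : IntervalIntegrable (fun v : ℝ => C2 * v ^ (-p2)) volume r0 η := auxP_ii h0 hr
  calc |∫ v in r0..η, f v| ≤ ∫ v in r0..η, |f v| :=
        intervalIntegral.abs_integral_le_integral_abs hr
    _ ≤ ∫ v in r0..η, (C1 * v ^ (-p1) + C2 * v ^ (-p2)) :=
        intervalIntegral.integral_mono_on hr hf.abs (h1.add h2) hb
    _ = (∫ v in r0..η, C1 * v ^ (-p1)) + ∫ v in r0..η, C2 * v ^ (-p2) :=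
        intervalIntegral.integral_add h1 h2
    _ ≤ _ := add_le_add (auxP_int_pow_le h0 hr hp1 hC1) (auxP_int_pow_le h0 hr hp2 hC2)

lemma auxP_int_le2 {f : ℝ → ℝ} {r0 η p1 p2 C1 C2 : ℝ} (h0 : 0 < r0) (hr : r0 ≤ η)
    (hp1 : 1 < p1) (hp2 : 1 < p2) (hC1 : 0 ≤ C1) (hC2 : 0 ≤ C2)
    (hf : IntervalIntegrable f volume r0 η)
    (hb : ∀ v ∈ Set.Icc r0 η, f v ≤ C1 * v ^ (-p1) + C2 * v ^ (-p2)) :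
    ∫ v in r0..η, f v ≤ C1 / ((p1-1) * r0 ^ (p1-1)) + C2 / ((p2-1) * r0 ^ (p2-1)) := by
  have h1 : IntervalIntegrable (fun v : ℝ => C1 * v ^ (-p1)) volume r0 η := auxP_ii h0 hr
  have h2 : IntervalIntegrable (fun v : ℝ => C2 * v ^ (-p2)) volume r0 η := auxP_ii h0 hr
  calc ∫ v in r0..η, f v ≤ ∫ v in r0..η, (C1 * v ^ (-p1) + C2 * v ^ (-p2)) :=
        intervalIntegral.integral_mono_on hr hf (h1.add h2) hb
    _ = (∫ v in r0..η, C1 * v ^ (-p1)) + ∫ v in r0..η, C2 * v ^ (-p2) :=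
        intervalIntegral.integral_add h1 h2
    _ ≤ _ := add_le_add (auxP_int_pow_le h0 hr hp1 hC1) (auxP_int_pow_le h0 hr hp2 hC2)

lemma auxP_int_abs4 {f : ℝ → ℝ} {r0 η p1 p2 p3 p4 C1 C2 C3 C4 : ℝ} (h0 : 0 < r0) (hr : r0 ≤ η)
    (hp1 : 1 < p1) (hp2 : 1 < p2) (hp3 : 1 < p3) (hp4 : 1 < p4)
    (hC1 : 0 ≤ C1) (hC2 : 0 ≤ C2) (hC3 : 0 ≤ C3) (hC4 : 0 ≤ C4)
    (hf : IntervalIntegrable f volume r0 η)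
    (hb : ∀ v ∈ Set.Icc r0 η, |f v| ≤
      C1 * v ^ (-p1) + C2 * v ^ (-p2) + C3 * v ^ (-p3) + C4 * v ^ (-p4)) :
    |∫ v in r0..η, f v| ≤ C1 / ((p1-1) * r0 ^ (p1-1)) + C2 / ((p2-1) * r0 ^ (p2-1))
      + C3 / ((p3-1) * r0 ^ (p3-1)) + C4 / ((p4-1) * r0 ^ (p4-1)) := by
  have h1 : IntervalIntegrable (fun v : ℝ => C1 * v ^ (-p1)) volume r0 η := auxP_ii h0 hr
  have h2 : IntervalIntegrable (fun v : ℝ => C2 * v ^ (-p2)) volume r0 η := auxP_ii h0 hr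
  have h3 : IntervalIntegrable (fun v : ℝ => C3 * v ^ (-p3)) volume r0 η := auxP_ii h0 hr
  have h4 : IntervalIntegrable (fun v : ℝ => C4 * v ^ (-p4)) volume r0 η := auxP_ii h0 hr
  calc |∫ v in r0..η, f v| ≤ ∫ v in r0..η, |f v| :=
        intervalIntegral.abs_integral_le_integral_abs hr
    _ ≤ ∫ v in r0..η, (C1 * v ^ (-p1) + C2 * v ^ (-p2) + C3 * v ^ (-p3) + C4 * v ^ (-p4)) :=
        intervalIntegral.integral_mono_on hr hf.abs (((h1.add h2).add h3).add h4) hb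
    _ = ((∫ v in r0..η, C1 * v ^ (-p1)) + ∫ v in r0..η, C2 * v ^ (-p2))
        + (∫ v in r0..η, C3 * v ^ (-p3)) + ∫ v in r0..η, C4 * v ^ (-p4) := by
        rw [intervalIntegral.integral_add ((h1.add h2).add h3) h4,
          intervalIntegral.integral_add (h1.add h2) h3,
          intervalIntegral.integral_add h1 h2]
    _ ≤ _ := by
        exact add_le_add (add_le_add (add_le_add (auxP_int_pow_le h0 hr hp1 hC1)
          (auxP_int_pow_le h0 hr hp2 hC2)) (auxP_int_pow_le h0 hr hp3 hC3))
          (auxP_int_pow_le h0 hr hp4 hC4)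

lemma auxP_exp_lip {x y : ℝ} (hx : 0 ≤ x) (hy : 0 ≤ y) :
    |Real.exp (-x) - Real.exp (-y)| ≤ |x - y| := by
  wlog h : y ≤ x generalizing x y
  · rw [abs_sub_comm, abs_sub_comm x y]; exact this hy hx (le_of_not_ge h)
  have h1 : Real.exp (-x) ≤ Real.exp (-y) := Real.exp_le_exp.2 (by linarith)
  have h2 : Real.exp (-x) = Real.exp (-y) * Real.exp (-(x - y)) := by
    rw [← Real.exp_add]; ring_nf
  have h3 : 1 - (x - y) ≤ Real.exp (-(x - y)) := by
    have := Real.add_one_le_exp (-(x - y)); linarith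
  have h4 : Real.exp (-y) ≤ 1 := Real.exp_le_one_iff.2 (by linarith)
  have h5 : 0 < Real.exp (-y) := Real.exp_pos _
  rw [abs_of_nonpos (by linarith), abs_of_nonneg (by linarith)]
  nlinarith

lemma auxP_div_sub_div {a1 a2 b1 b2 A At B Bm : ℝ}
    (hBm : 0 < Bm) (hb1 : Bm ≤ b1) (hb2 : Bm ≤ b2)
    (ha2 : |a2| ≤ A) (hd : |a1 - a2| ≤ At) (hb : |b1 - b2| ≤ B) :
    |a1 / b1 - a2 / b2| ≤ At / Bm + A * B / Bm ^ 2 := by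
  have hb1' : 0 < b1 := lt_of_lt_of_le hBm hb1
  have hb2' : 0 < b2 := lt_of_lt_of_le hBm hb2
  have hA : 0 ≤ A := le_trans (abs_nonneg _) ha2
  have hAt : 0 ≤ At := le_trans (abs_nonneg _) hd
  have hB : 0 ≤ B := le_trans (abs_nonneg _) hb
  have key : a1 / b1 - a2 / b2 = (a1 - a2) / b1 + a2 * (b2 - b1) / (b1 * b2) := by
    field_simp; ring
  rw [key]
  calc |(a1 - a2) / b1 + a2 * (b2 - b1) / (b1 * b2)|
      ≤ |(a1 - a2) / b1| + |a2 * (b2 - b1) / (b1 * b2)| := abs_add_le _ _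
    _ = |a1 - a2| / b1 + |a2| * |b2 - b1| / (b1 * b2) := by
        rw [abs_div, abs_div, abs_mul, abs_of_pos hb1', abs_of_pos (mul_pos hb1' hb2')]
    _ ≤ At / Bm + A * B / Bm ^ 2 := by
        apply add_le_add
        · apply div_le_div₀ hAt hd hBm hb1
        · apply div_le_div₀ (mul_nonneg hA hB) _ (by positivity) _
          · exact mul_le_mul ha2 (by rw [abs_sub_comm] at hb; exact hb) (abs_nonneg _) hA
          · rw [sq]; exact mul_le_mul hb1 hb2 hBm.le (by linarith)

lemma auxP_rpow_sq {t p : ℝ} (ht : 0 < t) : (t ^ p) ^ 2 = t ^ (2 * p) := by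
  rw [← Real.rpow_natCast (t ^ p) 2, ← Real.rpow_mul ht.le]
  norm_num [mul_comm]
noncomputable section

lemma auxP_cont_primitive {g : ℝ → ℝ} {r0 : ℝ} (hg : ContinuousOn g (Set.Ici r0)) :
    ContinuousOn (fun x => ∫ t in r0..x, g t) (Set.Ici r0) := by
  intro x hx
  have hx' : r0 ≤ x := hx
  have hint : IntegrableOn g (Set.uIcc r0 (x+1)) volume := by
    rw [Set.uIcc_of_le (by linarith)]
    exact (hg.mono (fun y hy => hy.1)).integrableOn_Icc
  have hcont := intervalIntegral.continuousOn_primitive_interval hint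
  rw [Set.uIcc_of_le (by linarith : r0 ≤ x+1)] at hcont
  refine ContinuousWithinAt.mono_of_mem_nhdsWithin (hcont x ⟨hx', by linarith⟩) ?_
  rw [← Set.Ici_inter_Iic]
  exact Filter.inter_mem self_mem_nhdsWithin
    (mem_nhdsWithin_of_mem_nhds (Iic_mem_nhds (by linarith)))
def gE (c : Cst) (s0 r0 : ℝ) (L1 N1 K1 L2 N2 K2 : (ℝ → ℝ) → ℝ → ℝ) (f1 f2 : ℝ → ℝ)
    (v : ℝ) : ℝ :=
  2 * c.a * v * (N2 f2 v / L2 f2 v)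
    + c.D2 / Hf c s0 r0 L1 N1 K1 L2 N2 K2 f1 f2 * (K2 f2 v / (L2 f2 v * v ^ c.nu))

lemma E2f_eq_gE (c : Cst) (s0 r0 : ℝ) (L1 N1 K1 L2 N2 K2 : (ℝ → ℝ) → ℝ → ℝ)
    (f1 f2 : ℝ → ℝ) (η : ℝ) :
    E2f c s0 r0 L1 N1 K1 L2 N2 K2 f1 f2 η
      = Real.exp (-(∫ v in r0..η, gE c s0 r0 L1 N1 K1 L2 N2 K2 f1 f2 v)) := rfl

section Main

variable {c : Cst} {s0 r0 : ℝ} {L1 N1 K1 L2 N2 K2 : (ℝ → ℝ) → ℝ → ℝ} {f1 f2 g1 g2 : ℝ → ℝ}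

lemma lemHinfpos (h : PosC c s0 r0) : 0 < Hinf c s0 r0 := by
  obtain ⟨ha, hn0, hn1, hm, hs0, hsr, hD1, hD2, hQ, hD1s, hD2s, hL1m, hL1M, hN1m, hN1M, hK1m,
    hK1M, hL2m, hL2M, hN2m, hN2M, hK2m, hK2M, hLt1, hNt1, hKt1, hLt2, hNt2, hKt2⟩ := h
  have hq : 0 < c.mu + c.nu - 1 := by linarith
  have h1 : s0 ^ (c.mu + c.nu - 1) < r0 ^ (c.mu + c.nu - 1) :=
    Real.rpow_lt_rpow hs0.le hsr hq
  have h2 : r0 ^ (-(c.mu + c.nu - 1)) < s0 ^ (-(c.mu + c.nu - 1)) := by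
    rw [Real.rpow_neg hs0.le, Real.rpow_neg (by linarith : (0:ℝ) ≤ r0)]
    exact inv_strictAnti₀ (Real.rpow_pos_of_pos hs0 _) h1
  exact mul_pos (div_pos hK1m hq) (by linarith)

lemma lemHtilpos (h : PosC c s0 r0) : 0 < Htil c s0 r0 := by
  obtain ⟨ha, hn0, hn1, hm, hs0, hsr, hD1, hD2, hQ, hD1s, hD2s, hL1m, hL1M, hN1m, hN1M, hK1m,
    hK1M, hL2m, hL2M, hN2m, hN2M, hK2m, hK2M, hLt1, hNt1, hKt1, hLt2, hNt2, hKt2⟩ := h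
  have hq : 0 < c.mu + c.nu - 1 := by linarith
  have hr0 : 0 < r0 := hs0.trans hsr
  apply div_pos _ hq
  have h1 := Real.rpow_pos_of_pos hs0 (-(c.mu + c.nu - 1))
  have h2 := Real.rpow_pos_of_pos hr0 (-(c.mu + c.nu - 1))
  positivity

lemma lemHge (hpos : PosC c s0 r0) (hA : Assum c s0 r0 L1 N1 K1 L2 N2 K2)
    (hf1 : f1 ∈ C1 s0 r0) (hf2 : f2 ∈ Mset r0) :
    Hinf c s0 r0 ≤ Hf c s0 r0 L1 N1 K1 L2 N2 K2 f1 f2 := by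
  obtain ⟨ha, hn0, hn1, hm, hs0, hsr, hD1, hD2, hQ, hD1s, hD2s, hL1m, hL1M, hN1m, hN1M, hK1m,
    hK1M, hL2m, hL2M, hN2m, hN2M, hK2m, hK2M, hLt1, hNt1, hKt1, hLt2, hNt2, hKt2⟩ := hpos
  have hr0 : 0 < r0 := hs0.trans hsr
  have hq : 1 < c.mu + c.nu := by linarith
  have hc1 : ContinuousOn (fun v => K1 f1 v / v ^ c.nu) (Set.uIcc s0 r0) := by
    rw [Set.uIcc_of_le hsr.le]
    exact ((hA.1 f1 hf1).2.2).div
      (ContinuousOn.rpow_const continuousOn_id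
        (fun x hx => Or.inl (ne_of_gt (lt_of_lt_of_le hs0 hx.1))))
      (fun x hx => ne_of_gt (Real.rpow_pos_of_pos (lt_of_lt_of_le hs0 hx.1) _))
  have hge : ∀ v ∈ Set.Icc s0 r0, c.K1m * v ^ (-(c.mu + c.nu)) ≤ K1 f1 v / v ^ c.nu := by
    intro v hv
    have hv0 : 0 < v := lt_of_lt_of_le hs0 hv.1
    have hK := (hA.2.2.1 f1 hf1 v hv).2.2.2.2.1
    have he : c.K1m * v ^ (-(c.mu + c.nu)) = c.K1m * v ^ (-c.mu) / v ^ c.nu := by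
      rw [show -(c.mu + c.nu) = -c.mu - c.nu by ring, Real.rpow_sub hv0]; ring
    rw [he]
    exact (div_le_div_iff_of_pos_right (Real.rpow_pos_of_pos hv0 _)).2 hK
  have h1 := auxP_int_ge hs0 hsr.le hq hc1.intervalIntegrable hge
  have h2 : 0 ≤ ∫ v in Set.Ioi r0, K2 f2 v / v ^ c.nu := by
    apply setIntegral_nonneg measurableSet_Ioi
    intro v hv
    have hv0 : 0 < v := hr0.trans hv
    have hK := (hA.2.2.2.1 f2 hf2 v (Set.mem_Ici.2 (le_of_lt hv))).2.2.2.2.1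
    have : (0:ℝ) < c.K2m * v ^ (-c.mu) := mul_pos hK2m (Real.rpow_pos_of_pos hv0 _)
    exact div_nonneg (by linarith) (Real.rpow_pos_of_pos hv0 _).le
  have heq : c.K1m * ((s0 ^ (1 - (c.mu + c.nu)) - r0 ^ (1 - (c.mu + c.nu))) / (c.mu + c.nu - 1))
      = Hinf c s0 r0 := by
    unfold Hinf
    rw [show 1 - (c.mu + c.nu) = -(c.mu + c.nu - 1) by ring]
    ring
  unfold Hf
  rw [← heq]
  linarith

lemma lemHpos (hpos : PosC c s0 r0) (hA : Assum c s0 r0 L1 N1 K1 L2 N2 K2)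
    (hf1 : f1 ∈ C1 s0 r0) (hf2 : f2 ∈ Mset r0) :
    0 < Hf c s0 r0 L1 N1 K1 L2 N2 K2 f1 f2 :=
  lt_of_lt_of_le (lemHinfpos hpos) (lemHge hpos hA hf1 hf2)

end Main
section Main2

variable {c : Cst} {s0 r0 : ℝ} {L1 N1 K1 L2 N2 K2 : (ℝ → ℝ) → ℝ → ℝ} {f1 f2 g1 g2 : ℝ → ℝ}

lemma lemgcont (hpos : PosC c s0 r0) (hA : Assum c s0 r0 L1 N1 K1 L2 N2 K2)
    (hf1 : f1 ∈ C1 s0 r0) (hf2 : f2 ∈ Mset r0) :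
    ContinuousOn (gE c s0 r0 L1 N1 K1 L2 N2 K2 f1 f2) (Set.Ici r0) := by
  obtain ⟨ha, hn0, hn1, hm, hs0, hsr, hD1, hD2, hQ, hD1s, hD2s, hL1m, hL1M, hN1m, hN1M, hK1m,
    hK1M, hL2m, hL2M, hN2m, hN2M, hK2m, hK2M, hLt1, hNt1, hKt1, hLt2, hNt2, hKt2⟩ := hpos
  have hr0 : 0 < r0 := hs0.trans hsr
  obtain ⟨hLc, hNc, hKc⟩ := hA.2.1 f2 hf2
  have hLpos : ∀ x ∈ Set.Ici r0, L2 f2 x ≠ 0 := by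
    intro x hx
    have h1 := (hA.2.2.2.1 f2 hf2 x hx).1
    have h2 : (0:ℝ) < c.L2m * x ^ c.mu :=
      mul_pos hL2m (Real.rpow_pos_of_pos (hr0.trans_le hx) _)
    exact ne_of_gt (lt_of_lt_of_le h2 h1)
  have hrc : ContinuousOn (fun x : ℝ => x ^ c.nu) (Set.Ici r0) :=
    ContinuousOn.rpow_const continuousOn_id
      (fun x hx => Or.inl (ne_of_gt (hr0.trans_le hx)))
  apply ContinuousOn.add
  · exact ((continuousOn_const.mul continuousOn_id).mul (hNc.div hLc hLpos))
  · apply continuousOn_const.mul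
    apply hKc.div (hLc.mul hrc)
    intro x hx
    exact mul_ne_zero (hLpos x hx)
      (ne_of_gt (Real.rpow_pos_of_pos (hr0.trans_le hx) _))

lemma lemg0 (hpos : PosC c s0 r0) (hA : Assum c s0 r0 L1 N1 K1 L2 N2 K2)
    (hf1 : f1 ∈ C1 s0 r0) (hf2 : f2 ∈ Mset r0) :
    ∀ v ∈ Set.Ici r0, 0 ≤ gE c s0 r0 L1 N1 K1 L2 N2 K2 f1 f2 v := by
  obtain ⟨ha, hn0, hn1, hm, hs0, hsr, hD1, hD2, hQ, hD1s, hD2s, hL1m, hL1M, hN1m, hN1M, hK1m,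
    hK1M, hL2m, hL2M, hN2m, hN2M, hK2m, hK2M, hLt1, hNt1, hKt1, hLt2, hNt2, hKt2⟩ := hpos
  have hr0 : 0 < r0 := hs0.trans hsr
  intro v hv
  have hv0 : 0 < v := hr0.trans_le hv
  obtain ⟨hL, hLM, hN, hNM, hK, hKM⟩ := hA.2.2.2.1 f2 hf2 v hv
  have hLpos : 0 < L2 f2 v :=
    lt_of_lt_of_le (mul_pos hL2m (Real.rpow_pos_of_pos hv0 _)) hL
  have hNpos : 0 < N2 f2 v :=
    lt_of_lt_of_le (mul_pos hN2m (Real.rpow_pos_of_pos hv0 _)) hN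
  have hKpos : 0 < K2 f2 v :=
    lt_of_lt_of_le (mul_pos hK2m (Real.rpow_pos_of_pos hv0 _)) hK
  have hHpos := lemHpos ⟨ha, hn0, hn1, hm, hs0, hsr, hD1, hD2, hQ, hD1s, hD2s, hL1m, hL1M, hN1m,
    hN1M, hK1m, hK1M, hL2m, hL2M, hN2m, hN2M, hK2m, hK2M, hLt1, hNt1, hKt1, hLt2, hNt2, hKt2⟩
    hA hf1 hf2
  unfold gE
  have h1 : 0 ≤ 2 * c.a * v * (N2 f2 v / L2 f2 v) := by positivity
  have h2 : 0 ≤ c.D2 / Hf c s0 r0 L1 N1 K1 L2 N2 K2 f1 f2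
      * (K2 f2 v / (L2 f2 v * v ^ c.nu)) := by
    apply mul_nonneg (div_nonneg hD2.le hHpos.le)
    exact div_nonneg hKpos.le (mul_nonneg hLpos.le (Real.rpow_pos_of_pos hv0 _).le)
  linarith

lemma lemgle (hpos : PosC c s0 r0) (hA : Assum c s0 r0 L1 N1 K1 L2 N2 K2)
    (hf1 : f1 ∈ C1 s0 r0) (hf2 : f2 ∈ Mset r0) :
    ∀ v ∈ Set.Ici r0, gE c s0 r0 L1 N1 K1 L2 N2 K2 f1 f2 v ≤
      (2 * c.a * c.N2M / c.L2m) * v ^ (-(2 * c.mu - 1))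
        + (c.D2 * c.K2M / (Hinf c s0 r0 * c.L2m)) * v ^ (-(2 * c.mu + c.nu)) := by
  have hHinf := lemHinfpos hpos
  have hHge := lemHge hpos hA hf1 hf2
  obtain ⟨ha, hn0, hn1, hm, hs0, hsr, hD1, hD2, hQ, hD1s, hD2s, hL1m, hL1M, hN1m, hN1M, hK1m,
    hK1M, hL2m, hL2M, hN2m, hN2M, hK2m, hK2M, hLt1, hNt1, hKt1, hLt2, hNt2, hKt2⟩ := hpos
  have hr0 : 0 < r0 := hs0.trans hsr
  intro v hv
  have hv0 : 0 < v := hr0.trans_le hv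
  obtain ⟨hL, hLM, hN, hNM, hK, hKM⟩ := hA.2.2.2.1 f2 hf2 v hv
  have hvmu : (0:ℝ) < v ^ c.mu := Real.rpow_pos_of_pos hv0 _
  have hvnu : (0:ℝ) < v ^ c.nu := Real.rpow_pos_of_pos hv0 _
  have hvm : (0:ℝ) < v ^ (-c.mu) := Real.rpow_pos_of_pos hv0 _
  have hLpos : 0 < L2 f2 v := lt_of_lt_of_le (mul_pos hL2m hvmu) hL
  have hHpos : 0 < Hf c s0 r0 L1 N1 K1 L2 N2 K2 f1 f2 := lt_of_lt_of_le hHinf hHge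
  -- first term
  have t1 : 2 * c.a * v * (N2 f2 v / L2 f2 v)
      ≤ 2 * c.a * v * ((c.N2M * v ^ (-c.mu)) / (c.L2m * v ^ c.mu)) := by
    apply mul_le_mul_of_nonneg_left _ (by positivity)
    exact div_le_div₀ (by positivity) hNM (mul_pos hL2m hvmu) hL
  have e1 : 2 * c.a * v * ((c.N2M * v ^ (-c.mu)) / (c.L2m * v ^ c.mu))
      = (2 * c.a * c.N2M / c.L2m) * v ^ (-(2 * c.mu - 1)) := by
    rw [show -(2 * c.mu - 1) = 1 + -c.mu + -c.mu by ring, Real.rpow_add hv0,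
      Real.rpow_add hv0, Real.rpow_one, Real.rpow_neg hv0.le]
    field_simp
  -- second term
  have t2 : c.D2 / Hf c s0 r0 L1 N1 K1 L2 N2 K2 f1 f2 * (K2 f2 v / (L2 f2 v * v ^ c.nu))
      ≤ (c.D2 / Hinf c s0 r0) * ((c.K2M * v ^ (-c.mu)) / (c.L2m * v ^ (c.mu + c.nu))) := by
    apply mul_le_mul
    · exact div_le_div_of_nonneg_left hD2.le hHinf hHge
    · apply div_le_div₀ (by positivity) hKM (by positivity)
      rw [Real.rpow_add hv0, ← mul_assoc]
      exact mul_le_mul_of_nonneg_right hL hvnu.le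
    · exact div_nonneg (le_trans (by positivity) hK)
        (mul_nonneg hLpos.le hvnu.le)
    · positivity
  have e2 : (c.D2 / Hinf c s0 r0) * ((c.K2M * v ^ (-c.mu)) / (c.L2m * v ^ (c.mu + c.nu)))
      = (c.D2 * c.K2M / (Hinf c s0 r0 * c.L2m)) * v ^ (-(2 * c.mu + c.nu)) := by
    rw [show -(2 * c.mu + c.nu) = -c.mu + (-c.mu + -c.nu) by ring, Real.rpow_add hv0,
      Real.rpow_add hv0, Real.rpow_add hv0, Real.rpow_neg hv0.le, Real.rpow_neg hv0.le]
    field_simp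
  unfold gE
  rw [← e1, ← e2]
  exact add_le_add t1 t2

end Main2
section Main3

variable {c : Cst} {s0 r0 : ℝ} {L1 N1 K1 L2 N2 K2 : (ℝ → ℝ) → ℝ → ℝ} {f1 f2 g1 g2 : ℝ → ℝ}

lemma lemA0 (hpos : PosC c s0 r0) (hA : Assum c s0 r0 L1 N1 K1 L2 N2 K2)
    (hf1 : f1 ∈ C1 s0 r0) (hf2 : f2 ∈ Mset r0) :
    ∀ w ∈ Set.Ici r0, 0 ≤ ∫ v in r0..w, gE c s0 r0 L1 N1 K1 L2 N2 K2 f1 f2 v := by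
  intro w hw
  apply intervalIntegral.integral_nonneg hw
  intro v hv
  exact lemg0 hpos hA hf1 hf2 v hv.1

lemma lemgEii (hpos : PosC c s0 r0) (hA : Assum c s0 r0 L1 N1 K1 L2 N2 K2)
    (hf1 : f1 ∈ C1 s0 r0) (hf2 : f2 ∈ Mset r0) {w : ℝ} (hw : r0 ≤ w) :
    IntervalIntegrable (gE c s0 r0 L1 N1 K1 L2 N2 K2 f1 f2) MeasureTheory.volume r0 w := by
  apply ContinuousOn.intervalIntegrable
  apply (lemgcont hpos hA hf1 hf2).mono
  rw [Set.uIcc_of_le hw]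
  exact fun x hx => hx.1

lemma lemE2le1 (hpos : PosC c s0 r0) (hA : Assum c s0 r0 L1 N1 K1 L2 N2 K2)
    (hf1 : f1 ∈ C1 s0 r0) (hf2 : f2 ∈ Mset r0) :
    ∀ w ∈ Set.Ici r0, E2f c s0 r0 L1 N1 K1 L2 N2 K2 f1 f2 w ≤ 1 := by
  intro w hw
  rw [E2f_eq_gE]
  apply Real.exp_le_one_iff.2
  simp only [neg_nonpos]
  exact lemA0 hpos hA hf1 hf2 w hw

lemma lemE2pos (w : ℝ) : 0 < E2f c s0 r0 L1 N1 K1 L2 N2 K2 f1 f2 w := Real.exp_pos _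

lemma lemE2ge (hpos : PosC c s0 r0) (hA : Assum c s0 r0 L1 N1 K1 L2 N2 K2)
    (hf1 : f1 ∈ C1 s0 r0) (hf2 : f2 ∈ Mset r0) :
    ∀ w ∈ Set.Ici r0, E2inf c s0 r0 ≤ E2f c s0 r0 L1 N1 K1 L2 N2 K2 f1 f2 w := by
  have hHinf := lemHinfpos hpos
  have hgle := lemgle hpos hA hf1 hf2
  have hgii : ∀ w : ℝ, r0 ≤ w →
      IntervalIntegrable (gE c s0 r0 L1 N1 K1 L2 N2 K2 f1 f2) MeasureTheory.volume r0 w :=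
    fun w hw => lemgEii hpos hA hf1 hf2 hw
  obtain ⟨ha, hn0, hn1, hm, hs0, hsr, hD1, hD2, hQ, hD1s, hD2s, hL1m, hL1M, hN1m, hN1M, hK1m,
    hK1M, hL2m, hL2M, hN2m, hN2M, hK2m, hK2M, hLt1, hNt1, hKt1, hLt2, hNt2, hKt2⟩ := hpos
  have hr0 : 0 < r0 := hs0.trans hsr
  intro w hw
  have hAle : ∫ v in r0..w, gE c s0 r0 L1 N1 K1 L2 N2 K2 f1 f2 v
      ≤ (2 * c.a * c.N2M / c.L2m) / ((2 * c.mu - 1 - 1) * r0 ^ (2 * c.mu - 1 - 1))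
        + (c.D2 * c.K2M / (Hinf c s0 r0 * c.L2m))
          / ((2 * c.mu + c.nu - 1) * r0 ^ (2 * c.mu + c.nu - 1)) := by
    apply auxP_int_le2 hr0 hw (by linarith) (by linarith) (by positivity) (by positivity)
      (hgii w hw)
    intro v hv
    exact hgle v hv.1
  have heq : (2 * c.a * c.N2M / c.L2m) / ((2 * c.mu - 1 - 1) * r0 ^ (2 * c.mu - 1 - 1))
        + (c.D2 * c.K2M / (Hinf c s0 r0 * c.L2m))
          / ((2 * c.mu + c.nu - 1) * r0 ^ (2 * c.mu + c.nu - 1))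
      = c.a * c.N2M / (c.L2m * (c.mu - 1) * r0 ^ (2 * c.mu - 2))
        + c.D2 * c.K2M / (Hinf c s0 r0 * c.L2m * (2 * c.mu + c.nu - 1)
            * r0 ^ (2 * c.mu + c.nu - 1)) := by
    rw [show 2 * c.mu - 1 - 1 = 2 * c.mu - 2 by ring]
    have h1 : (0:ℝ) < r0 ^ (2 * c.mu - 2) := Real.rpow_pos_of_pos hr0 _
    have h2 : (0:ℝ) < r0 ^ (2 * c.mu + c.nu - 1) := Real.rpow_pos_of_pos hr0 _
    have h3 : c.mu - 1 ≠ 0 := by intro h; linarith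
    have h4 : 2 * c.mu + c.nu - 1 ≠ 0 := by intro h; linarith
    have e1 : 2 * c.a * c.N2M / c.L2m / ((2 * c.mu - 2) * r0 ^ (2 * c.mu - 2))
        = c.a * c.N2M / (c.L2m * (c.mu - 1) * r0 ^ (2 * c.mu - 2)) := by
      rw [show 2 * c.mu - 2 = 2 * (c.mu - 1) by ring] 
      rw [div_div, div_eq_div_iff (by positivity) (by positivity)]
      ring
    have e2 : c.D2 * c.K2M / (Hinf c s0 r0 * c.L2m)
          / ((2 * c.mu + c.nu - 1) * r0 ^ (2 * c.mu + c.nu - 1))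
        = c.D2 * c.K2M / (Hinf c s0 r0 * c.L2m * (2 * c.mu + c.nu - 1)
            * r0 ^ (2 * c.mu + c.nu - 1)) := by
      rw [div_div]; ring_nf
    rw [e1, e2]
  rw [E2f_eq_gE]
  unfold E2inf
  apply Real.exp_le_exp.2
  rw [neg_le_neg_iff]
  rw [heq] at hAle
  exact hAle

lemma lemE2cont (hpos : PosC c s0 r0) (hA : Assum c s0 r0 L1 N1 K1 L2 N2 K2)
    (hf1 : f1 ∈ C1 s0 r0) (hf2 : f2 ∈ Mset r0) :
    ContinuousOn (E2f c s0 r0 L1 N1 K1 L2 N2 K2 f1 f2) (Set.Ici r0) := by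
  have h := (auxP_cont_primitive (lemgcont hpos hA hf1 hf2)).neg
  exact Real.continuous_exp.comp_continuousOn h

lemma lemIcont (hpos : PosC c s0 r0) (hA : Assum c s0 r0 L1 N1 K1 L2 N2 K2)
    (hf1 : f1 ∈ C1 s0 r0) (hf2 : f2 ∈ Mset r0) :
    ContinuousOn
      (fun v => E2f c s0 r0 L1 N1 K1 L2 N2 K2 f1 f2 v / (L2 f2 v * v ^ c.nu))
      (Set.Ici r0) := by
  obtain ⟨ha, hn0, hn1, hm, hs0, hsr, hD1, hD2, hQ, hD1s, hD2s, hL1m, hL1M, hN1m, hN1M, hK1m,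
    hK1M, hL2m, hL2M, hN2m, hN2M, hK2m, hK2M, hLt1, hNt1, hKt1, hLt2, hNt2, hKt2⟩ := id hpos
  have hr0 : 0 < r0 := hs0.trans hsr
  apply (lemE2cont hpos hA hf1 hf2).div
  · apply ((hA.2.1 f2 hf2).1).mul
    exact ContinuousOn.rpow_const continuousOn_id
      (fun x hx => Or.inl (ne_of_gt (hr0.trans_le hx)))
  · intro x hx
    have hx0 : 0 < x := hr0.trans_le hx
    have h1 := (hA.2.2.2.1 f2 hf2 x hx).1
    have : (0:ℝ) < L2 f2 x := lt_of_lt_of_le (by positivity) h1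
    positivity

end Main3
section Main4

variable {c : Cst} {s0 r0 : ℝ} {L1 N1 K1 L2 N2 K2 : (ℝ → ℝ) → ℝ → ℝ} {f1 f2 g1 g2 : ℝ → ℝ}

lemma lemIii (hpos : PosC c s0 r0) (hA : Assum c s0 r0 L1 N1 K1 L2 N2 K2)
    (hf1 : f1 ∈ C1 s0 r0) (hf2 : f2 ∈ Mset r0) {w : ℝ} (hw : r0 ≤ w) :
    IntervalIntegrable
      (fun v => E2f c s0 r0 L1 N1 K1 L2 N2 K2 f1 f2 v / (L2 f2 v * v ^ c.nu))
      MeasureTheory.volume r0 w := by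
  apply ContinuousOn.intervalIntegrable
  apply (lemIcont hpos hA hf1 hf2).mono
  rw [Set.uIcc_of_le hw]
  exact fun x hx => hx.1

lemma lemPhi2upper (hpos : PosC c s0 r0) (hA : Assum c s0 r0 L1 N1 K1 L2 N2 K2)
    (hf1 : f1 ∈ C1 s0 r0) (hf2 : f2 ∈ Mset r0) {η : ℝ} (hη : r0 ≤ η) :
    Phi2f c s0 r0 L1 N1 K1 L2 N2 K2 f1 f2 η
      ≤ 1 / (c.L2m * (c.mu + c.nu - 1) * r0 ^ (c.mu + c.nu - 1)) := by
  have hii := lemIii hpos hA hf1 hf2 hη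
  have hE2le1 := lemE2le1 hpos hA hf1 hf2
  obtain ⟨ha, hn0, hn1, hm, hs0, hsr, hD1, hD2, hQ, hD1s, hD2s, hL1m, hL1M, hN1m, hN1M, hK1m,
    hK1M, hL2m, hL2M, hN2m, hN2M, hK2m, hK2M, hLt1, hNt1, hKt1, hLt2, hNt2, hKt2⟩ := id hpos
  have hr0 : 0 < r0 := hs0.trans hsr
  have hb : ∀ v ∈ Set.Icc r0 η,
      E2f c s0 r0 L1 N1 K1 L2 N2 K2 f1 f2 v / (L2 f2 v * v ^ c.nu)
        ≤ (1 / c.L2m) * v ^ (-(c.mu + c.nu)) := by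
    intro v hv
    have hv0 : 0 < v := hr0.trans_le hv.1
    obtain ⟨hL, hLM, hN, hNM, hK, hKM⟩ := hA.2.2.2.1 f2 hf2 v hv.1
    have hvnu : (0:ℝ) < v ^ c.nu := Real.rpow_pos_of_pos hv0 _
    have hvq : (0:ℝ) < v ^ (c.mu + c.nu) := Real.rpow_pos_of_pos hv0 _
    have hd : c.L2m * v ^ (c.mu + c.nu) ≤ L2 f2 v * v ^ c.nu := by
      rw [Real.rpow_add hv0, ← mul_assoc]
      exact mul_le_mul_of_nonneg_right hL hvnu.le
    have h1 : E2f c s0 r0 L1 N1 K1 L2 N2 K2 f1 f2 v / (L2 f2 v * v ^ c.nu)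
        ≤ 1 / (c.L2m * v ^ (c.mu + c.nu)) :=
      div_le_div₀ zero_le_one (hE2le1 v hv.1) (by positivity) hd
    have h2 : 1 / (c.L2m * v ^ (c.mu + c.nu)) = (1 / c.L2m) * v ^ (-(c.mu + c.nu)) := by
      rw [Real.rpow_neg hv0.le]
      field_simp
    linarith
  have := auxP_int_le hr0 hη (by linarith : (1:ℝ) < c.mu + c.nu) (by positivity) hii hb
  have heq : (1 / c.L2m) / ((c.mu + c.nu - 1) * r0 ^ (c.mu + c.nu - 1))
      = 1 / (c.L2m * (c.mu + c.nu - 1) * r0 ^ (c.mu + c.nu - 1)) := by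
    rw [div_div, one_div, one_div, mul_assoc]
  rw [heq] at this
  exact this

lemma lemPhi2lower (hpos : PosC c s0 r0) (hA : Assum c s0 r0 L1 N1 K1 L2 N2 K2)
    (hf1 : f1 ∈ C1 s0 r0) (hf2 : f2 ∈ Mset r0) {η : ℝ} (hη : r0 ≤ η) :
    E2inf c s0 r0 / (c.L2M * (c.mu + c.nu - 1))
        * (r0 ^ (-(c.mu + c.nu - 1)) - η ^ (-(c.mu + c.nu - 1)))
      ≤ Phi2f c s0 r0 L1 N1 K1 L2 N2 K2 f1 f2 η := by
  have hii := lemIii hpos hA hf1 hf2 hη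
  have hE2ge := lemE2ge hpos hA hf1 hf2
  obtain ⟨ha, hn0, hn1, hm, hs0, hsr, hD1, hD2, hQ, hD1s, hD2s, hL1m, hL1M, hN1m, hN1M, hK1m,
    hK1M, hL2m, hL2M, hN2m, hN2M, hK2m, hK2M, hLt1, hNt1, hKt1, hLt2, hNt2, hKt2⟩ := id hpos
  have hr0 : 0 < r0 := hs0.trans hsr
  have hEinf : 0 < E2inf c s0 r0 := Real.exp_pos _
  have hb : ∀ v ∈ Set.Icc r0 η,
      (E2inf c s0 r0 / c.L2M) * v ^ (-(c.mu + c.nu))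
        ≤ E2f c s0 r0 L1 N1 K1 L2 N2 K2 f1 f2 v / (L2 f2 v * v ^ c.nu) := by
    intro v hv
    have hv0 : 0 < v := hr0.trans_le hv.1
    obtain ⟨hL, hLM, hN, hNM, hK, hKM⟩ := hA.2.2.2.1 f2 hf2 v hv.1
    have hvnu : (0:ℝ) < v ^ c.nu := Real.rpow_pos_of_pos hv0 _
    have hvq : (0:ℝ) < v ^ (c.mu + c.nu) := Real.rpow_pos_of_pos hv0 _
    have hvmu : (0:ℝ) < v ^ c.mu := Real.rpow_pos_of_pos hv0 _
    have hLpos : 0 < L2 f2 v := lt_of_lt_of_le (by positivity) hL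
    have hd : L2 f2 v * v ^ c.nu ≤ c.L2M * v ^ (c.mu + c.nu) := by
      rw [Real.rpow_add hv0, ← mul_assoc]
      exact mul_le_mul_of_nonneg_right hLM hvnu.le
    have h1 : E2inf c s0 r0 / (c.L2M * v ^ (c.mu + c.nu))
        ≤ E2f c s0 r0 L1 N1 K1 L2 N2 K2 f1 f2 v / (L2 f2 v * v ^ c.nu) :=
      div_le_div₀ (lemE2pos v).le (hE2ge v hv.1) (by positivity) hd
    have h2 : E2inf c s0 r0 / (c.L2M * v ^ (c.mu + c.nu))
        = (E2inf c s0 r0 / c.L2M) * v ^ (-(c.mu + c.nu)) := by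
      rw [Real.rpow_neg hv0.le]
      field_simp
    linarith
  have := auxP_int_ge hr0 hη (by linarith : (1:ℝ) < c.mu + c.nu) hii hb
  have heq : (E2inf c s0 r0 / c.L2M)
        * ((r0 ^ (1 - (c.mu + c.nu)) - η ^ (1 - (c.mu + c.nu))) / (c.mu + c.nu - 1))
      = E2inf c s0 r0 / (c.L2M * (c.mu + c.nu - 1))
        * (r0 ^ (-(c.mu + c.nu - 1)) - η ^ (-(c.mu + c.nu - 1))) := by
    rw [show 1 - (c.mu + c.nu) = -(c.mu + c.nu - 1) by ring]
    have hq : (0:ℝ) < c.mu + c.nu - 1 := by linarith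
    field_simp [hq.ne', hL2M.ne']
  rw [heq] at this
  exact this

end Main4
lemma lemSupNonneg (S : Set ℝ) (f : ℝ → ℝ) : 0 ≤ supOn S f :=
  Real.iSup_nonneg (fun _ => abs_nonneg _)

section Main5

variable {c : Cst} {s0 r0 : ℝ} {L1 N1 K1 L2 N2 K2 : (ℝ → ℝ) → ℝ → ℝ} {f1 f2 g1 g2 : ℝ → ℝ}

lemma lemHlip (hpos : PosC c s0 r0) (hA : Assum c s0 r0 L1 N1 K1 L2 N2 K2)
    (hf1 : f1 ∈ C1 s0 r0) (hf2 : f2 ∈ Mset r0) (hg1 : g1 ∈ C1 s0 r0) (hg2 : g2 ∈ Mset r0) :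
    |Hf c s0 r0 L1 N1 K1 L2 N2 K2 f1 f2 - Hf c s0 r0 L1 N1 K1 L2 N2 K2 g1 g2|
      ≤ Htil c s0 r0 * pairNorm s0 r0 f1 f2 g1 g2 := by
  obtain ⟨ha, hn0, hn1, hm, hs0, hsr, hD1, hD2, hQ, hD1s, hD2s, hL1m, hL1M, hN1m, hN1M, hK1m,
    hK1M, hL2m, hL2M, hN2m, hN2M, hK2m, hK2M, hLt1, hNt1, hKt1, hLt2, hNt2, hKt2⟩ := id hpos
  have hr0 : 0 < r0 := hs0.trans hsr
  have hq : (0:ℝ) < c.mu + c.nu - 1 := by linarith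
  set s1 := supOn (Set.Icc s0 r0) (f1 - g1) with hs1
  set s2 := supOn (Set.Ici r0) (f2 - g2) with hs2
  set d := pairNorm s0 r0 f1 f2 g1 g2 with hd
  have hs1d : s1 ≤ d := le_max_left _ _
  have hs2d : s2 ≤ d := le_max_right _ _
  have hs1n : 0 ≤ s1 := lemSupNonneg _ _
  have hs2n : 0 ≤ s2 := lemSupNonneg _ _
  have hdn : 0 ≤ d := le_trans hs1n hs1d
  -- continuity of the K1-integrands on [s0,r0]
  have hcont1 : ∀ (p1 : ℝ → ℝ), p1 ∈ C1 s0 r0 →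
      ContinuousOn (fun v => K1 p1 v / v ^ c.nu) (Set.uIcc s0 r0) := by
    intro p1 hp1
    rw [Set.uIcc_of_le hsr.le]
    exact ((hA.1 p1 hp1).2.2).div
      (ContinuousOn.rpow_const continuousOn_id
        (fun x hx => Or.inl (ne_of_gt (lt_of_lt_of_le hs0 hx.1))))
      (fun x hx => ne_of_gt (Real.rpow_pos_of_pos (lt_of_lt_of_le hs0 hx.1) _))
  have hint1f : IntervalIntegrable (fun v => K1 f1 v / v ^ c.nu) MeasureTheory.volume s0 r0 :=
    (hcont1 f1 hf1).intervalIntegrable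
  have hint1g : IntervalIntegrable (fun v => K1 g1 v / v ^ c.nu) MeasureTheory.volume s0 r0 :=
    (hcont1 g1 hg1).intervalIntegrable
  -- the inner interval difference
  have hI1 : |(∫ v in s0..r0, K1 f1 v / v ^ c.nu) - ∫ v in s0..r0, K1 g1 v / v ^ c.nu|
      ≤ (c.Kt1 * s1) / ((c.mu + c.nu - 1) * s0 ^ (c.mu + c.nu - 1)) := by
    rw [← intervalIntegral.integral_sub hint1f hint1g]
    apply auxP_int_abs hs0 hsr.le (by linarith : (1:ℝ) < c.mu + c.nu) (by positivity)
      (hint1f.sub hint1g)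
    intro v hv
    have hv0 : 0 < v := lt_of_lt_of_le hs0 hv.1
    have hvnu : (0:ℝ) < v ^ c.nu := Real.rpow_pos_of_pos hv0 _
    have hKlip := (hA.2.2.2.2.1 f1 hf1 g1 hg1 v hv).2.2
    rw [div_sub_div_same, abs_div, abs_of_pos hvnu]
    have h1 : |K1 f1 v - K1 g1 v| / v ^ c.nu ≤ (c.Kt1 * v ^ (-c.mu) * s1) / v ^ c.nu :=
      (div_le_div_iff_of_pos_right hvnu).2 hKlip
    have h2 : (c.Kt1 * v ^ (-c.mu) * s1) / v ^ c.nu = c.Kt1 * s1 * v ^ (-(c.mu + c.nu)) := by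
      rw [show -(c.mu + c.nu) = -c.mu - c.nu by ring, Real.rpow_sub hv0]
      ring
    linarith
  -- the Ioi part
  have hlt : -(c.mu + c.nu) < -1 := by linarith
  have hdomint : ∀ C : ℝ, MeasureTheory.IntegrableOn
      (fun v : ℝ => C * v ^ (-(c.mu + c.nu))) (Set.Ioi r0) := by
    intro C
    exact (integrableOn_Ioi_rpow_of_lt hlt hr0).const_mul C
  have hintI : ∀ (p2 : ℝ → ℝ), p2 ∈ Mset r0 → MeasureTheory.IntegrableOn
      (fun v => K2 p2 v / v ^ c.nu) (Set.Ioi r0) := by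
    intro p2 hp2
    have hcont : ContinuousOn (fun v => K2 p2 v / v ^ c.nu) (Set.Ioi r0) := by
      apply ((hA.2.1 p2 hp2).2.2.mono Set.Ioi_subset_Ici_self).div
        ((ContinuousOn.rpow_const continuousOn_id
          (fun x hx => Or.inl (ne_of_gt (hr0.trans hx)))))
        (fun x hx => ne_of_gt (Real.rpow_pos_of_pos (hr0.trans hx) _))
    apply MeasureTheory.Integrable.mono' (hdomint c.K2M)
      (hcont.aestronglyMeasurable measurableSet_Ioi)
    rw [MeasureTheory.ae_restrict_iff' measurableSet_Ioi]
    apply MeasureTheory.ae_of_all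
    intro v hv
    have hv0 : 0 < v := hr0.trans hv
    obtain ⟨hL, hLM, hN, hNM, hK, hKM⟩ := hA.2.2.2.1 p2 hp2 v (Set.mem_Ici.2 (le_of_lt hv))
    have hvnu : (0:ℝ) < v ^ c.nu := Real.rpow_pos_of_pos hv0 _
    have hKpos : 0 < K2 p2 v := lt_of_lt_of_le (by positivity) hK
    rw [Real.norm_eq_abs, abs_of_pos (by positivity)]
    have h1 : K2 p2 v / v ^ c.nu ≤ (c.K2M * v ^ (-c.mu)) / v ^ c.nu :=
      (div_le_div_iff_of_pos_right hvnu).2 hKM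
    have h2 : (c.K2M * v ^ (-c.mu)) / v ^ c.nu = c.K2M * v ^ (-(c.mu + c.nu)) := by
      rw [show -(c.mu + c.nu) = -c.mu - c.nu by ring, Real.rpow_sub hv0]
      ring
    linarith
  have hI2 : |(∫ v in Set.Ioi r0, K2 f2 v / v ^ c.nu)
        - ∫ v in Set.Ioi r0, K2 g2 v / v ^ c.nu|
      ≤ c.Kt2 * s2 * (r0 ^ (-(c.mu + c.nu - 1)) / (c.mu + c.nu - 1)) := by
    rw [← MeasureTheory.integral_sub (hintI f2 hf2) (hintI g2 hg2)]
    have hbd : ∀ᵐ v ∂(MeasureTheory.volume.restrict (Set.Ioi r0)),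
        ‖K2 f2 v / v ^ c.nu - K2 g2 v / v ^ c.nu‖
          ≤ (c.Kt2 * s2) * v ^ (-(c.mu + c.nu)) := by
      rw [MeasureTheory.ae_restrict_iff' measurableSet_Ioi]
      apply MeasureTheory.ae_of_all
      intro v hv
      have hv0 : 0 < v := hr0.trans hv
      have hvnu : (0:ℝ) < v ^ c.nu := Real.rpow_pos_of_pos hv0 _
      have hKlip := (hA.2.2.2.2.2 f2 hf2 g2 hg2 v (Set.mem_Ici.2 (le_of_lt hv))).2.2
      rw [Real.norm_eq_abs, div_sub_div_same, abs_div, abs_of_pos hvnu]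
      have h1 : |K2 f2 v - K2 g2 v| / v ^ c.nu ≤ (c.Kt2 * v ^ (-c.mu) * s2) / v ^ c.nu :=
        (div_le_div_iff_of_pos_right hvnu).2 hKlip
      have h2 : (c.Kt2 * v ^ (-c.mu) * s2) / v ^ c.nu
          = (c.Kt2 * s2) * v ^ (-(c.mu + c.nu)) := by
        rw [show -(c.mu + c.nu) = -c.mu - c.nu by ring, Real.rpow_sub hv0]
        ring
      linarith
    have := MeasureTheory.norm_integral_le_of_norm_le (hdomint (c.Kt2 * s2)) hbd
    rw [Real.norm_eq_abs] at this
    apply this.trans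
    rw [MeasureTheory.integral_const_mul, integral_Ioi_rpow_of_lt hlt hr0]
    rw [show -(c.mu + c.nu) + 1 = -(c.mu + c.nu - 1) by ring, neg_div_neg_eq]
  -- combine
  have htri : |Hf c s0 r0 L1 N1 K1 L2 N2 K2 f1 f2 - Hf c s0 r0 L1 N1 K1 L2 N2 K2 g1 g2|
      ≤ |(∫ v in s0..r0, K1 f1 v / v ^ c.nu) - ∫ v in s0..r0, K1 g1 v / v ^ c.nu|
        + |(∫ v in Set.Ioi r0, K2 f2 v / v ^ c.nu)
            - ∫ v in Set.Ioi r0, K2 g2 v / v ^ c.nu| := by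
    unfold Hf
    apply le_trans _ (abs_add_le _ _)
    apply le_of_eq
    congr 1
    ring
  have hP : (0:ℝ) < s0 ^ (c.mu + c.nu - 1) := Real.rpow_pos_of_pos hs0 _
  have hrn : (0:ℝ) < r0 ^ (-(c.mu + c.nu - 1)) := Real.rpow_pos_of_pos hr0 _
  have m1 : (c.Kt1 * s1) / ((c.mu + c.nu - 1) * s0 ^ (c.mu + c.nu - 1))
      ≤ (c.Kt1 * d) / ((c.mu + c.nu - 1) * s0 ^ (c.mu + c.nu - 1)) :=
    (div_le_div_iff_of_pos_right (by positivity)).2 (mul_le_mul_of_nonneg_left hs1d hKt1.le)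
  have m2 : c.Kt2 * s2 * (r0 ^ (-(c.mu + c.nu - 1)) / (c.mu + c.nu - 1))
      ≤ c.Kt2 * d * (r0 ^ (-(c.mu + c.nu - 1)) / (c.mu + c.nu - 1)) :=
    mul_le_mul_of_nonneg_right (mul_le_mul_of_nonneg_left hs2d hKt2.le) (by positivity)
  have heq : (c.Kt1 * d) / ((c.mu + c.nu - 1) * s0 ^ (c.mu + c.nu - 1))
        + c.Kt2 * d * (r0 ^ (-(c.mu + c.nu - 1)) / (c.mu + c.nu - 1))
      = Htil c s0 r0 * d := by
    unfold Htil
    rw [Real.rpow_neg hs0.le]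
    field_simp [hq.ne']
  linarith

end Main5
section Main6

variable {c : Cst} {s0 r0 : ℝ} {L1 N1 K1 L2 N2 K2 : (ℝ → ℝ) → ℝ → ℝ} {f1 f2 g1 g2 : ℝ → ℝ}

lemma lemglip (hpos : PosC c s0 r0) (hA : Assum c s0 r0 L1 N1 K1 L2 N2 K2)
    (hf1 : f1 ∈ C1 s0 r0) (hf2 : f2 ∈ Mset r0) (hg1 : g1 ∈ C1 s0 r0) (hg2 : g2 ∈ Mset r0) :
    ∀ v ∈ Set.Ici r0,
      |gE c s0 r0 L1 N1 K1 L2 N2 K2 f1 f2 v - gE c s0 r0 L1 N1 K1 L2 N2 K2 g1 g2 v|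
        ≤ (2 * c.a * c.Nt2 * pairNorm s0 r0 f1 f2 g1 g2 / c.L2m) * v ^ (-(c.mu - 1))
          + (2 * c.a * c.N2M * c.Lt2 * pairNorm s0 r0 f1 f2 g1 g2 / c.L2m ^ 2)
              * v ^ (-(3 * c.mu - 1))
          + (c.D2 * c.Kt2 * pairNorm s0 r0 f1 f2 g1 g2 / (Hinf c s0 r0 * c.L2m)
              + c.D2 * c.K2M * (Htil c s0 r0 * pairNorm s0 r0 f1 f2 g1 g2)
                  / (Hinf c s0 r0 ^ 2 * c.L2m)) * v ^ (-(2 * c.mu + c.nu))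
          + (c.D2 * c.K2M * c.Lt2 * pairNorm s0 r0 f1 f2 g1 g2
              / (Hinf c s0 r0 * c.L2m ^ 2)) * v ^ (-(3 * c.mu + c.nu)) := by
  have hHinfpos := lemHinfpos hpos
  have hHFge := lemHge hpos hA hf1 hf2
  have hHGge := lemHge hpos hA hg1 hg2
  have hHlip := lemHlip hpos hA hf1 hf2 hg1 hg2
  obtain ⟨ha, hn0, hn1, hm, hs0, hsr, hD1, hD2, hQ, hD1s, hD2s, hL1m, hL1M, hN1m, hN1M, hK1m,
    hK1M, hL2m, hL2M, hN2m, hN2M, hK2m, hK2M, hLt1, hNt1, hKt1, hLt2, hNt2, hKt2⟩ := id hpos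
  have hr0 : 0 < r0 := hs0.trans hsr
  set s2 := supOn (Set.Ici r0) (f2 - g2) with hs2
  set d := pairNorm s0 r0 f1 f2 g1 g2 with hd
  have hs2d : s2 ≤ d := le_max_right _ _
  have hs2n : 0 ≤ s2 := lemSupNonneg _ _
  have hdn : 0 ≤ d := le_trans hs2n hs2d
  intro v hv
  have hv0 : 0 < v := hr0.trans_le hv
  obtain ⟨hLf, hLfM, hNf, hNfM, hKf, hKfM⟩ := hA.2.2.2.1 f2 hf2 v hv
  obtain ⟨hLg, hLgM, hNg, hNgM, hKg, hKgM⟩ := hA.2.2.2.1 g2 hg2 v hv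
  obtain ⟨hlipL0, hlipN0, hlipK0⟩ := hA.2.2.2.2.2 f2 hf2 g2 hg2 v hv
  have hvmu : (0:ℝ) < v ^ c.mu := Real.rpow_pos_of_pos hv0 _
  have hvnu : (0:ℝ) < v ^ c.nu := Real.rpow_pos_of_pos hv0 _
  have hvm : (0:ℝ) < v ^ (-c.mu) := Real.rpow_pos_of_pos hv0 _
  have hvq : (0:ℝ) < v ^ (c.mu + c.nu) := Real.rpow_pos_of_pos hv0 _
  have hlipL : |L2 f2 v - L2 g2 v| ≤ c.Lt2 * d :=
    hlipL0.trans (mul_le_mul_of_nonneg_left hs2d hLt2.le)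
  have hlipN : |N2 f2 v - N2 g2 v| ≤ c.Nt2 * d :=
    hlipN0.trans (mul_le_mul_of_nonneg_left hs2d hNt2.le)
  have hlipK : |K2 f2 v - K2 g2 v| ≤ c.Kt2 * v ^ (-c.mu) * d :=
    hlipK0.trans (mul_le_mul_of_nonneg_left hs2d (by positivity))
  have hNgabs : |N2 g2 v| ≤ c.N2M * v ^ (-c.mu) := by
    rw [abs_of_pos (lt_of_lt_of_le (by positivity) hNg)]; exact hNgM
  have hKgabs : |K2 g2 v| ≤ c.K2M * v ^ (-c.mu) := by
    rw [abs_of_pos (lt_of_lt_of_le (by positivity) hKg)]; exact hKgM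
  -- N/L quotient bound
  have hQb : |N2 f2 v / L2 f2 v - N2 g2 v / L2 g2 v|
      ≤ (c.Nt2 * d) / (c.L2m * v ^ c.mu)
        + (c.N2M * v ^ (-c.mu)) * (c.Lt2 * d) / (c.L2m * v ^ c.mu) ^ 2 :=
    auxP_div_sub_div (by positivity) hLf hLg hNgabs hlipN hlipL
  -- denominators with v^nu
  have hbf : c.L2m * v ^ (c.mu + c.nu) ≤ L2 f2 v * v ^ c.nu := by
    rw [Real.rpow_add hv0, ← mul_assoc]
    exact mul_le_mul_of_nonneg_right hLf hvnu.le
  have hbg : c.L2m * v ^ (c.mu + c.nu) ≤ L2 g2 v * v ^ c.nu := by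
    rw [Real.rpow_add hv0, ← mul_assoc]
    exact mul_le_mul_of_nonneg_right hLg hvnu.le
  have hlipLnu : |L2 f2 v * v ^ c.nu - L2 g2 v * v ^ c.nu| ≤ c.Lt2 * d * v ^ c.nu := by
    rw [← sub_mul, abs_mul, abs_of_pos hvnu]
    exact mul_le_mul_of_nonneg_right hlipL hvnu.le
  have hXb : |K2 f2 v / (L2 f2 v * v ^ c.nu) - K2 g2 v / (L2 g2 v * v ^ c.nu)|
      ≤ (c.Kt2 * v ^ (-c.mu) * d) / (c.L2m * v ^ (c.mu + c.nu))
        + (c.K2M * v ^ (-c.mu)) * (c.Lt2 * d * v ^ c.nu)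
            / (c.L2m * v ^ (c.mu + c.nu)) ^ 2 :=
    auxP_div_sub_div (by positivity) hbf hbg hKgabs hlipK hlipLnu
  have hXgabs : |K2 g2 v / (L2 g2 v * v ^ c.nu)|
      ≤ (c.K2M * v ^ (-c.mu)) / (c.L2m * v ^ (c.mu + c.nu)) := by
    have hLgpos : 0 < L2 g2 v := lt_of_lt_of_le (by positivity) hLg
    have hKgpos : 0 < K2 g2 v := lt_of_lt_of_le (by positivity) hKg
    rw [abs_of_pos (by positivity)]
    exact div_le_div₀ (by positivity) hKgM (by positivity) hbg
  have hXHb : |K2 f2 v / (L2 f2 v * v ^ c.nu) / Hf c s0 r0 L1 N1 K1 L2 N2 K2 f1 f2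
        - K2 g2 v / (L2 g2 v * v ^ c.nu) / Hf c s0 r0 L1 N1 K1 L2 N2 K2 g1 g2|
      ≤ ((c.Kt2 * v ^ (-c.mu) * d) / (c.L2m * v ^ (c.mu + c.nu))
          + (c.K2M * v ^ (-c.mu)) * (c.Lt2 * d * v ^ c.nu)
              / (c.L2m * v ^ (c.mu + c.nu)) ^ 2) / Hinf c s0 r0
        + ((c.K2M * v ^ (-c.mu)) / (c.L2m * v ^ (c.mu + c.nu)))
            * (Htil c s0 r0 * d) / Hinf c s0 r0 ^ 2 :=
    auxP_div_sub_div hHinfpos hHFge hHGge hXgabs hXb hHlip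
  -- split gE difference
  have hsplit : gE c s0 r0 L1 N1 K1 L2 N2 K2 f1 f2 v - gE c s0 r0 L1 N1 K1 L2 N2 K2 g1 g2 v
      = 2 * c.a * v * (N2 f2 v / L2 f2 v - N2 g2 v / L2 g2 v)
        + c.D2 * (K2 f2 v / (L2 f2 v * v ^ c.nu) / Hf c s0 r0 L1 N1 K1 L2 N2 K2 f1 f2
            - K2 g2 v / (L2 g2 v * v ^ c.nu) / Hf c s0 r0 L1 N1 K1 L2 N2 K2 g1 g2) := by
    unfold gE
    ring
  have htri : |gE c s0 r0 L1 N1 K1 L2 N2 K2 f1 f2 v - gE c s0 r0 L1 N1 K1 L2 N2 K2 g1 g2 v|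
      ≤ 2 * c.a * v * ((c.Nt2 * d) / (c.L2m * v ^ c.mu)
          + (c.N2M * v ^ (-c.mu)) * (c.Lt2 * d) / (c.L2m * v ^ c.mu) ^ 2)
        + c.D2 * (((c.Kt2 * v ^ (-c.mu) * d) / (c.L2m * v ^ (c.mu + c.nu))
            + (c.K2M * v ^ (-c.mu)) * (c.Lt2 * d * v ^ c.nu)
                / (c.L2m * v ^ (c.mu + c.nu)) ^ 2) / Hinf c s0 r0
          + ((c.K2M * v ^ (-c.mu)) / (c.L2m * v ^ (c.mu + c.nu)))
              * (Htil c s0 r0 * d) / Hinf c s0 r0 ^ 2) := by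
    rw [hsplit]
    calc |2 * c.a * v * (N2 f2 v / L2 f2 v - N2 g2 v / L2 g2 v)
          + c.D2 * (K2 f2 v / (L2 f2 v * v ^ c.nu) / Hf c s0 r0 L1 N1 K1 L2 N2 K2 f1 f2
              - K2 g2 v / (L2 g2 v * v ^ c.nu) / Hf c s0 r0 L1 N1 K1 L2 N2 K2 g1 g2)|
        ≤ |2 * c.a * v * (N2 f2 v / L2 f2 v - N2 g2 v / L2 g2 v)|
          + |c.D2 * (K2 f2 v / (L2 f2 v * v ^ c.nu) / Hf c s0 r0 L1 N1 K1 L2 N2 K2 f1 f2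
              - K2 g2 v / (L2 g2 v * v ^ c.nu) / Hf c s0 r0 L1 N1 K1 L2 N2 K2 g1 g2)| :=
          abs_add_le _ _
      _ ≤ _ := by
          have e1 : |2 * c.a * v * (N2 f2 v / L2 f2 v - N2 g2 v / L2 g2 v)|
              = 2 * c.a * v * |N2 f2 v / L2 f2 v - N2 g2 v / L2 g2 v| := by
            rw [abs_mul, abs_of_nonneg (by positivity : (0:ℝ) ≤ 2 * c.a * v)]
          have e2 : |c.D2 * (K2 f2 v / (L2 f2 v * v ^ c.nu)
                / Hf c s0 r0 L1 N1 K1 L2 N2 K2 f1 f2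
              - K2 g2 v / (L2 g2 v * v ^ c.nu) / Hf c s0 r0 L1 N1 K1 L2 N2 K2 g1 g2)|
              = c.D2 * |K2 f2 v / (L2 f2 v * v ^ c.nu)
                  / Hf c s0 r0 L1 N1 K1 L2 N2 K2 f1 f2
                - K2 g2 v / (L2 g2 v * v ^ c.nu)
                  / Hf c s0 r0 L1 N1 K1 L2 N2 K2 g1 g2| := by
            rw [abs_mul, abs_of_nonneg hD2.le]
          rw [e1, e2]
          exact add_le_add (mul_le_mul_of_nonneg_left hQb (by positivity))
            (mul_le_mul_of_nonneg_left hXHb hD2.le)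
  apply htri.trans
  apply le_of_eq
  rw [show -(c.mu - 1) = 1 + -c.mu by ring,
    show -(3 * c.mu - 1) = 1 + -c.mu + -c.mu + -c.mu by ring,
    show -(2 * c.mu + c.nu) = -c.mu + -c.mu + -c.nu by ring,
    show -(3 * c.mu + c.nu) = -c.mu + -c.mu + -c.mu + -c.nu by ring]
  simp only [Real.rpow_add hv0, Real.rpow_one, Real.rpow_neg hv0.le]
  field_simp
  ring

end Main6
section Main7

variable {c : Cst} {s0 r0 : ℝ} {L1 N1 K1 L2 N2 K2 : (ℝ → ℝ) → ℝ → ℝ} {f1 f2 g1 g2 : ℝ → ℝ}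

lemma lemAlip (hpos : PosC c s0 r0) (hA : Assum c s0 r0 L1 N1 K1 L2 N2 K2)
    (hf1 : f1 ∈ C1 s0 r0) (hf2 : f2 ∈ Mset r0) (hg1 : g1 ∈ C1 s0 r0) (hg2 : g2 ∈ Mset r0) :
    ∀ w ∈ Set.Ici r0,
      |(∫ v in r0..w, gE c s0 r0 L1 N1 K1 L2 N2 K2 f1 f2 v)
          - ∫ v in r0..w, gE c s0 r0 L1 N1 K1 L2 N2 K2 g1 g2 v|
        ≤ E2til c s0 r0 * pairNorm s0 r0 f1 f2 g1 g2 := by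
  have hHinfpos := lemHinfpos hpos
  have hHtilpos := lemHtilpos hpos
  have hglip := lemglip hpos hA hf1 hf2 hg1 hg2
  obtain ⟨ha, hn0, hn1, hm, hs0, hsr, hD1, hD2, hQ, hD1s, hD2s, hL1m, hL1M, hN1m, hN1M, hK1m,
    hK1M, hL2m, hL2M, hN2m, hN2M, hK2m, hK2M, hLt1, hNt1, hKt1, hLt2, hNt2, hKt2⟩ := id hpos
  have hr0 : 0 < r0 := hs0.trans hsr
  set d := pairNorm s0 r0 f1 f2 g1 g2 with hd
  have hdn : 0 ≤ d := le_trans (lemSupNonneg _ _) (le_max_left _ _)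
  intro w hw
  rw [← intervalIntegral.integral_sub (lemgEii hpos hA hf1 hf2 hw)
    (lemgEii hpos hA hg1 hg2 hw)]
  have key := auxP_int_abs4 (f := fun v => gE c s0 r0 L1 N1 K1 L2 N2 K2 f1 f2 v
      - gE c s0 r0 L1 N1 K1 L2 N2 K2 g1 g2 v)
    (p1 := c.mu - 1) (p2 := 3 * c.mu - 1) (p3 := 2 * c.mu + c.nu) (p4 := 3 * c.mu + c.nu)
    (C1 := 2 * c.a * c.Nt2 * d / c.L2m)
    (C2 := 2 * c.a * c.N2M * c.Lt2 * d / c.L2m ^ 2)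
    (C3 := c.D2 * c.Kt2 * d / (Hinf c s0 r0 * c.L2m)
      + c.D2 * c.K2M * (Htil c s0 r0 * d) / (Hinf c s0 r0 ^ 2 * c.L2m))
    (C4 := c.D2 * c.K2M * c.Lt2 * d / (Hinf c s0 r0 * c.L2m ^ 2))
    hr0 hw (by linarith) (by linarith) (by linarith) (by linarith)
    (by positivity) (by positivity) (by positivity) (by positivity)
    ((lemgEii hpos hA hf1 hf2 hw).sub (lemgEii hpos hA hg1 hg2 hw))
    (fun v hv => hglip v hv.1)
  apply key.trans
  apply le_of_eq
  rw [show c.mu - 1 - 1 = c.mu - 2 by ring, show 3 * c.mu - 1 - 1 = 3 * c.mu - 2 by ring]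
  unfold E2til
  have P1 : (0:ℝ) < r0 ^ (c.mu - 2) := Real.rpow_pos_of_pos hr0 _
  have P2 : (0:ℝ) < r0 ^ (3 * c.mu - 2) := Real.rpow_pos_of_pos hr0 _
  have P3 : (0:ℝ) < r0 ^ (2 * c.mu + c.nu - 1) := Real.rpow_pos_of_pos hr0 _
  have P4 : (0:ℝ) < r0 ^ (3 * c.mu + c.nu - 1) := Real.rpow_pos_of_pos hr0 _
  have q1 : c.mu - 2 ≠ 0 := by intro h; linarith
  have q2 : 3 * c.mu - 2 ≠ 0 := by intro h; linarith
  have q3 : 2 * c.mu + c.nu - 1 ≠ 0 := by intro h; linarith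
  have q4 : 3 * c.mu + c.nu - 1 ≠ 0 := by intro h; linarith
  field_simp [q1, q2, q3, q4, P1.ne', P2.ne', P3.ne', P4.ne', hHinfpos.ne', hL2m.ne']
  ring

lemma lemPhi2lip (hpos : PosC c s0 r0) (hA : Assum c s0 r0 L1 N1 K1 L2 N2 K2)
    (hf1 : f1 ∈ C1 s0 r0) (hf2 : f2 ∈ Mset r0) (hg1 : g1 ∈ C1 s0 r0) (hg2 : g2 ∈ Mset r0)
    {η : ℝ} (hη : r0 ≤ η) :
    |Phi2f c s0 r0 L1 N1 K1 L2 N2 K2 f1 f2 η - Phi2f c s0 r0 L1 N1 K1 L2 N2 K2 g1 g2 η|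
      ≤ Phi2til c s0 r0 * pairNorm s0 r0 f1 f2 g1 g2 := by
  have hHinfpos := lemHinfpos hpos
  have hHtilpos := lemHtilpos hpos
  have hAlip := lemAlip hpos hA hf1 hf2 hg1 hg2
  have hA0f := lemA0 hpos hA hf1 hf2
  have hA0g := lemA0 hpos hA hg1 hg2
  have hE2le1g := lemE2le1 hpos hA hg1 hg2
  -- nonnegativity of E2til
  have hE2tilnn : 0 ≤ E2til c s0 r0 := by
    obtain ⟨ha, hn0, hn1, hm, hs0, hsr, hD1, hD2, hQ, hD1s, hD2s, hL1m, hL1M, hN1m, hN1M, hK1m,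
      hK1M, hL2m, hL2M, hN2m, hN2M, hK2m, hK2M, hLt1, hNt1, hKt1, hLt2, hNt2, hKt2⟩ := id hpos
    have hr0 : 0 < r0 := hs0.trans hsr
    unfold E2til
    have P1 : (0:ℝ) < r0 ^ (c.mu - 2) := Real.rpow_pos_of_pos hr0 _
    have P2 : (0:ℝ) < r0 ^ (3 * c.mu - 2) := Real.rpow_pos_of_pos hr0 _
    have P3 : (0:ℝ) < r0 ^ (2 * c.mu + c.nu - 1) := Real.rpow_pos_of_pos hr0 _
    have P4 : (0:ℝ) < r0 ^ (3 * c.mu + c.nu - 1) := Real.rpow_pos_of_pos hr0 _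
    have q1 : (0:ℝ) < c.mu - 2 := by linarith
    have q2 : (0:ℝ) < 3 * c.mu - 2 := by linarith
    have q3 : (0:ℝ) < 2 * c.mu + c.nu - 1 := by linarith
    have q4 : (0:ℝ) < 3 * c.mu + c.nu - 1 := by linarith
    have hH := hHinfpos
    have hHt := hHtilpos
    positivity
  obtain ⟨ha, hn0, hn1, hm, hs0, hsr, hD1, hD2, hQ, hD1s, hD2s, hL1m, hL1M, hN1m, hN1M, hK1m,
    hK1M, hL2m, hL2M, hN2m, hN2M, hK2m, hK2M, hLt1, hNt1, hKt1, hLt2, hNt2, hKt2⟩ := id hpos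
  have hr0 : 0 < r0 := hs0.trans hsr
  set d := pairNorm s0 r0 f1 f2 g1 g2 with hd
  have hdn : 0 ≤ d := le_trans (lemSupNonneg _ _) (le_max_left _ _)
  unfold Phi2f
  rw [← intervalIntegral.integral_sub (lemIii hpos hA hf1 hf2 hη) (lemIii hpos hA hg1 hg2 hη)]
  have key := auxP_int_abs2 (f := fun v => E2f c s0 r0 L1 N1 K1 L2 N2 K2 f1 f2 v
        / (L2 f2 v * v ^ c.nu)
      - E2f c s0 r0 L1 N1 K1 L2 N2 K2 g1 g2 v / (L2 g2 v * v ^ c.nu))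
    (p1 := c.mu + c.nu) (p2 := 2 * c.mu + c.nu)
    (C1 := E2til c s0 r0 * d / c.L2m) (C2 := c.Lt2 * d / c.L2m ^ 2)
    hr0 hη (by linarith) (by linarith) (by positivity) (by positivity)
    ((lemIii hpos hA hf1 hf2 hη).sub (lemIii hpos hA hg1 hg2 hη)) ?_
  · apply key.trans
    apply le_of_eq
    unfold Phi2til
    have P1 : (0:ℝ) < r0 ^ (c.mu + c.nu - 1) := Real.rpow_pos_of_pos hr0 _
    have P2 : (0:ℝ) < r0 ^ (2 * c.mu + c.nu - 1) := Real.rpow_pos_of_pos hr0 _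
    have q1 : c.mu + c.nu - 1 ≠ 0 := by intro h; linarith
    have q3 : 2 * c.mu + c.nu - 1 ≠ 0 := by intro h; linarith
    field_simp [q1, q3, P1.ne', P2.ne', hL2m.ne']
  -- pointwise bound
  intro v hv
  have hvr : v ∈ Set.Ici r0 := hv.1
  have hv0 : 0 < v := hr0.trans_le hv.1
  obtain ⟨hLf, hLfM, hNf, hNfM, hKf, hKfM⟩ := hA.2.2.2.1 f2 hf2 v hvr
  obtain ⟨hLg, hLgM, hNg, hNgM, hKg, hKgM⟩ := hA.2.2.2.1 g2 hg2 v hvr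
  obtain ⟨hlipL0, -, -⟩ := hA.2.2.2.2.2 f2 hf2 g2 hg2 v hvr
  have hvmu : (0:ℝ) < v ^ c.mu := Real.rpow_pos_of_pos hv0 _
  have hvnu : (0:ℝ) < v ^ c.nu := Real.rpow_pos_of_pos hv0 _
  have hvq : (0:ℝ) < v ^ (c.mu + c.nu) := Real.rpow_pos_of_pos hv0 _
  have hs2d : supOn (Set.Ici r0) (f2 - g2) ≤ d := le_max_right _ _
  have hlipL : |L2 f2 v - L2 g2 v| ≤ c.Lt2 * d :=
    hlipL0.trans (mul_le_mul_of_nonneg_left hs2d hLt2.le)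
  have hbf : c.L2m * v ^ (c.mu + c.nu) ≤ L2 f2 v * v ^ c.nu := by
    rw [Real.rpow_add hv0, ← mul_assoc]
    exact mul_le_mul_of_nonneg_right hLf hvnu.le
  have hbg : c.L2m * v ^ (c.mu + c.nu) ≤ L2 g2 v * v ^ c.nu := by
    rw [Real.rpow_add hv0, ← mul_assoc]
    exact mul_le_mul_of_nonneg_right hLg hvnu.le
  have hlipLnu : |L2 f2 v * v ^ c.nu - L2 g2 v * v ^ c.nu| ≤ c.Lt2 * d * v ^ c.nu := by
    rw [← sub_mul, abs_mul, abs_of_pos hvnu]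
    exact mul_le_mul_of_nonneg_right hlipL hvnu.le
  have hEgabs : |E2f c s0 r0 L1 N1 K1 L2 N2 K2 g1 g2 v| ≤ 1 := by
    rw [abs_of_pos (lemE2pos v)]
    exact hE2le1g v hvr
  have hElip : |E2f c s0 r0 L1 N1 K1 L2 N2 K2 f1 f2 v
      - E2f c s0 r0 L1 N1 K1 L2 N2 K2 g1 g2 v| ≤ E2til c s0 r0 * d := by
    rw [E2f_eq_gE, E2f_eq_gE]
    exact (auxP_exp_lip (hA0f v hvr) (hA0g v hvr)).trans (hAlip v hvr)
  have hmain := auxP_div_sub_div (by positivity : (0:ℝ) < c.L2m * v ^ (c.mu + c.nu))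
    hbf hbg hEgabs hElip hlipLnu
  apply hmain.trans
  apply le_of_eq
  rw [show -(c.mu + c.nu) = -c.mu + -c.nu by ring,
    show -(2 * c.mu + c.nu) = -c.mu + -c.mu + -c.nu by ring]
  simp only [Real.rpow_add hv0, Real.rpow_one, Real.rpow_neg hv0.le]
  field_simp

end Main7
theorem stmt12 (c : Cst) (s0 r0 : ℝ) (L1 N1 K1 L2 N2 K2 : (ℝ → ℝ) → ℝ → ℝ)
    (hpos : PosC c s0 r0) (hA : Assum c s0 r0 L1 N1 K1 L2 N2 K2)
    (f1 f2 : ℝ → ℝ) (hf1 : f1 ∈ C1 s0 r0) (hf2 : f2 ∈ Mset r0)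
    (g1 g2 : ℝ → ℝ) (hg1 : g1 ∈ C1 s0 r0) (hg2 : g2 ∈ Mset r0) :
    ∀ η ∈ Set.Ici r0,
      (E2inf c s0 r0 / (c.L2M * (c.mu + c.nu - 1))
            * (r0 ^ (-(c.mu + c.nu - 1)) - η ^ (-(c.mu + c.nu - 1)))
          ≤ Phi2f c s0 r0 L1 N1 K1 L2 N2 K2 f1 f2 η) ∧
        Phi2f c s0 r0 L1 N1 K1 L2 N2 K2 f1 f2 η ≤ 1 / (c.L2m * (c.mu + c.nu - 1) * r0 ^ (c.mu + c.nu - 1)) ∧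
        |Phi2f c s0 r0 L1 N1 K1 L2 N2 K2 f1 f2 η - Phi2f c s0 r0 L1 N1 K1 L2 N2 K2 g1 g2 η| ≤ Phi2til c s0 r0 * pairNorm s0 r0 f1 f2 g1 g2 := by
  intro η hη
  exact ⟨lemPhi2lower hpos hA hf1 hf2 hη, lemPhi2upper hpos hA hf1 hf2 hη,
    lemPhi2lip hpos hA hf1 hf2 hg1 hg2 hη⟩
end
end
end
end
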